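/- In the stochastic LSE soft Q-learning setting below, for every k ≥ 0, E[‖Q_k^{LSE} − Q*‖_∞] ≤ 3√6·α^{1/2}·d_max·(log(|A|)+β)·n/(β·d_min^{3/2}·(1−γ)^{5/2}) + 4·α·γ·d_max·n^{3/2}·k·ρ^{k−1}/(1−γ) + log(|A|)/(β·d_min·(1−γ)) + 2·n^{3/2}·ρ^k/(1−γ). -/

import Mathlib

open MeasureTheory ProbabilityTheory Finset

set_option linter.unusedSectionVars false
set_option maxHeartbeats 1000000
set_option linter.unusedVariables false

namespace LSEQ

variable {S A : Type*} [Fintype S] [Fintype A] [Nonempty S] [Nonempty A]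
  [DecidableEq S] [DecidableEq A]

/-- max over A -/
noncomputable def mxA (f : A → ℝ) : ℝ := Finset.univ.sup' Finset.univ_nonempty f

/-- log-sum-exp -/
noncomputable def lse (β : ℝ) (f : A → ℝ) : ℝ :=
  (1 / β) * Real.log (∑ b, Real.exp (β * f b))

lemma le_mxA (f : A → ℝ) (b : A) : f b ≤ mxA f :=
  Finset.le_sup' f (Finset.mem_univ b)

lemma mxA_le {f : A → ℝ} {c : ℝ} (h : ∀ b, f b ≤ c) : mxA f ≤ c :=
  Finset.sup'_le _ _ fun b _ => h b

lemma abs_mxA_le {f : A → ℝ} {c : ℝ} (h : ∀ b, |f b| ≤ c) : |mxA f| ≤ c := by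
  obtain ⟨b, _, hb⟩ := Finset.exists_mem_eq_sup' Finset.univ_nonempty f
  rw [mxA, hb]; exact h b

lemma sum_exp_pos (β : ℝ) (f : A → ℝ) : 0 < ∑ b, Real.exp (β * f b) :=
  Finset.sum_pos (fun b _ => Real.exp_pos _) Finset.univ_nonempty

lemma mxA_le_lse {β : ℝ} (hβ : 0 < β) (f : A → ℝ) : mxA f ≤ lse β f := by
  obtain ⟨b, _, hb⟩ := Finset.exists_mem_eq_sup' Finset.univ_nonempty f
  rw [mxA, hb, lse]
  have h1 : Real.exp (β * f b) ≤ ∑ b', Real.exp (β * f b') :=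
    Finset.single_le_sum (f := fun b' => Real.exp (β * f b'))
      (fun b' _ => (Real.exp_pos _).le) (Finset.mem_univ b)
  have h2 : β * f b ≤ Real.log (∑ b', Real.exp (β * f b')) := by
    rw [← Real.log_exp (β * f b)]
    exact Real.log_le_log (Real.exp_pos _) h1
  calc f b = (1/β) * (β * f b) := by field_simp
    _ ≤ (1/β) * Real.log (∑ b', Real.exp (β * f b')) := by
        apply mul_le_mul_of_nonneg_left h2 (by positivity)

lemma lse_le_mxA {β : ℝ} (hβ : 0 < β) (f : A → ℝ) :
    lse β f ≤ mxA f + Real.log (Fintype.card A) / β := by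
  have hcard : (0:ℝ) < (Fintype.card A : ℝ) := by
    exact_mod_cast Fintype.card_pos
  have h1 : ∑ b, Real.exp (β * f b) ≤ (Fintype.card A : ℝ) * Real.exp (β * mxA f) := by
    calc ∑ b, Real.exp (β * f b) ≤ ∑ _b : A, Real.exp (β * mxA f) := by
          apply Finset.sum_le_sum
          intro b _
          exact Real.exp_le_exp.2 (mul_le_mul_of_nonneg_left (le_mxA f b) hβ.le)
      _ = (Fintype.card A : ℝ) * Real.exp (β * mxA f) := by
          rw [Finset.sum_const, Finset.card_univ, nsmul_eq_mul]
  have h2 : Real.log (∑ b, Real.exp (β * f b)) ≤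
      Real.log (Fintype.card A) + β * mxA f := by
    calc Real.log (∑ b, Real.exp (β * f b)) ≤
        Real.log ((Fintype.card A : ℝ) * Real.exp (β * mxA f)) :=
          Real.log_le_log (sum_exp_pos β f) h1
      _ = Real.log (Fintype.card A) + β * mxA f := by
          rw [Real.log_mul (ne_of_gt hcard) (Real.exp_ne_zero _), Real.log_exp]
  calc lse β f ≤ (1/β) * (Real.log (Fintype.card A) + β * mxA f) := by
        exact mul_le_mul_of_nonneg_left h2 (by positivity)
    _ = mxA f + Real.log (Fintype.card A) / β := by field_simp; ring

lemma lse_le_lse_add {β : ℝ} (hβ : 0 < β) {f g : A → ℝ} {c : ℝ}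
    (h : ∀ b, f b ≤ g b + c) : lse β f ≤ lse β g + c := by
  have h1 : ∑ b, Real.exp (β * f b) ≤ Real.exp (β * c) * ∑ b, Real.exp (β * g b) := by
    rw [Finset.mul_sum]
    apply Finset.sum_le_sum
    intro b _
    rw [← Real.exp_add]
    exact Real.exp_le_exp.2 (by nlinarith [h b, hβ.le])
  have h2 : Real.log (∑ b, Real.exp (β * f b)) ≤
      β * c + Real.log (∑ b, Real.exp (β * g b)) := by
    calc Real.log (∑ b, Real.exp (β * f b)) ≤
        Real.log (Real.exp (β * c) * ∑ b, Real.exp (β * g b)) :=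
          Real.log_le_log (sum_exp_pos β f) h1
      _ = β * c + Real.log (∑ b, Real.exp (β * g b)) := by
          rw [Real.log_mul (Real.exp_ne_zero _) (ne_of_gt (sum_exp_pos β g)), Real.log_exp]
  calc lse β f ≤ (1/β) * (β * c + Real.log (∑ b, Real.exp (β * g b))) :=
        mul_le_mul_of_nonneg_left h2 (by positivity)
    _ = lse β g + c := by rw [lse]; field_simp; ring

lemma abs_lse_sub_lse {β : ℝ} (hβ : 0 < β) {f g : A → ℝ} {c : ℝ} (hc : 0 ≤ c)
    (h : ∀ b, |f b - g b| ≤ c) : |lse β f - lse β g| ≤ c := by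
  rw [abs_le]
  constructor
  · have := lse_le_lse_add hβ (f := g) (g := f) (c := c)
      (fun b => by have := h b; rw [abs_le] at this; linarith [this.1])
    linarith
  · have := lse_le_lse_add hβ (f := f) (g := g) (c := c)
      (fun b => by have := h b; rw [abs_le] at this; linarith [this.2])
    linarith

lemma abs_lse_le {β : ℝ} (hβ : 0 < β) {f : A → ℝ} {c : ℝ}
    (h : ∀ b, |f b| ≤ c) : |lse β f| ≤ c + Real.log (Fintype.card A) / β := by
  have hL : 0 ≤ Real.log (Fintype.card A) := by
    apply Real.log_nonneg
    exact_mod_cast Fintype.card_pos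
  have hc : 0 ≤ c := le_trans (abs_nonneg _) (h (Classical.arbitrary A))
  rw [abs_le]
  constructor
  · have h1 : -c ≤ mxA f := by
      obtain b := Classical.arbitrary A
      calc -c ≤ f b := by have := h b; rw [abs_le] at this; linarith [this.1]
        _ ≤ mxA f := le_mxA f b
    have h2 := mxA_le_lse hβ f
    have : 0 ≤ Real.log (Fintype.card A) / β := by positivity
    linarith
  · have h1 : mxA f ≤ c := mxA_le (fun b => by have := h b; rw [abs_le] at this; linarith [this.2])
    have h2 := lse_le_mxA hβ f
    linarith

/-- sup-norm over S×A pairs -/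
noncomputable def NrmP (f : S × A → ℝ) : ℝ :=
  Finset.univ.sup' Finset.univ_nonempty (fun p => |f p|)

lemma abs_le_NrmP (f : S × A → ℝ) (p : S × A) : |f p| ≤ NrmP f :=
  Finset.le_sup' (fun p => |f p|) (Finset.mem_univ p)

lemma NrmP_le {f : S × A → ℝ} {c : ℝ} (h : ∀ p, |f p| ≤ c) : NrmP f ≤ c :=
  Finset.sup'_le _ _ fun p _ => h p

lemma NrmP_nonneg (f : S × A → ℝ) : 0 ≤ NrmP f :=
  le_trans (abs_nonneg _) (abs_le_NrmP f (Classical.arbitrary _))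

lemma NrmP_triangle (f g : S × A → ℝ) : NrmP (fun p => f p + g p) ≤ NrmP f + NrmP g := by
  apply NrmP_le
  intro p
  calc |f p + g p| ≤ |f p| + |g p| := abs_add_le _ _
    _ ≤ NrmP f + NrmP g := add_le_add (abs_le_NrmP f p) (abs_le_NrmP g p)

lemma NrmP_sq_le_sum_sq (f : S × A → ℝ) : NrmP f ^ 2 ≤ ∑ p, f p ^ 2 := by
  obtain ⟨p, _, hp⟩ := Finset.exists_mem_eq_sup' Finset.univ_nonempty (fun p : S × A => |f p|)
  rw [NrmP, hp]
  calc |f p| ^ 2 = f p ^ 2 := sq_abs _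
    _ ≤ ∑ q, f q ^ 2 := Finset.single_le_sum (f := fun q => f q ^ 2)
          (fun q _ => sq_nonneg _) (Finset.mem_univ p)



section Det

variable (α γ β : ℝ) (P : S → A → S → ℝ) (r : S → A → S → ℝ) (d : S → A → ℝ)
  (Q0 Qstar : S → A → ℝ)

/-- one sample update -/
noncomputable def stepQ (v : S × A × S) (Q : S → A → ℝ) : S → A → ℝ := fun s a =>
  Q s a + α * (if (s, a) = (v.1, v.2.1) then (1 : ℝ) else 0) *
    (r v.1 v.2.1 v.2.2 + γ * ((1 / β) * Real.log (∑ b, Real.exp (β * Q v.2.2 b)))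
      - Q v.1 v.2.1)

/-- the Q-iterates as a function of the sample history -/
noncomputable def QT : (k : ℕ) → (Fin k → S × A × S) → S → A → ℝ
  | 0, _ => Q0
  | k+1, t => stepQ α γ β r (t (Fin.last k)) (QT k (Fin.init t))

noncomputable def bfun (Q : S → A → ℝ) (p : S × A) (s' : S) : ℝ :=
  r p.1 p.2 s' + γ * lse β (Q s') - Q p.1 p.2

noncomputable def bbar (Q : S → A → ℝ) (p : S × A) : ℝ :=
  ∑ s', P p.1 p.2 s' * bfun γ β r Q p s'

noncomputable def wfun (Q : S → A → ℝ) (v : S × A × S) (p : S × A) : ℝ :=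
  (if p = (v.1, v.2.1) then bfun γ β r Q p v.2.2 else 0) - d p.1 p.2 * bbar γ β P r Q p

/-- the auxiliary linear comparison process -/
noncomputable def xT : (k : ℕ) → (Fin k → S × A × S) → S × A → ℝ
  | 0, _ => fun p => Q0 p.1 p.2 - Qstar p.1 p.2
  | k+1, t => fun p => (1 - α * d p.1 p.2) * xT k (Fin.init t) p
      + α * wfun γ β P r d (QT α γ β r Q0 k (Fin.init t)) (t (Fin.last k)) p

noncomputable def eT (k : ℕ) (t : Fin k → S × A × S) (p : S × A) : ℝ :=
  QT α γ β r Q0 k t p.1 p.2 - Qstar p.1 p.2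

noncomputable def qv (v : S × A × S) : ℝ := d v.1 v.2.1 * P v.1 v.2.1 v.2.2

noncomputable def Wt (k : ℕ) (t : Fin k → S × A × S) : ℝ := ∏ j, qv P d (t j)

end Det

/-- deterministic bound for the iterates -/
noncomputable def Qm (γ β L : ℝ) : ℝ := (1 + γ * (L / β)) / (1 - γ)

section DetLemmas

variable {α γ β : ℝ} {P : S → A → S → ℝ} {r : S → A → S → ℝ} {d : S → A → ℝ}
  {Q0 Qstar : S → A → ℝ}

lemma stepQ_eq (v : S × A × S) (Q : S → A → ℝ) (p : S × A) :
    stepQ α γ β r v Q p.1 p.2 =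
      Q p.1 p.2 + α * (if p = (v.1, v.2.1) then bfun γ β r Q p v.2.2 else 0) := by
  by_cases h : p = (v.1, v.2.1)
  · subst h
    simp only [stepQ, bfun, lse]
    norm_num
  · have h' : ¬((p.1, p.2) = (v.1, v.2.1)) := by
      intro hc
      exact h (by rw [← hc])
    simp only [stepQ, bfun, if_neg h, if_neg h']
    ring

lemma Qm_ge_one (hγ0 : 0 ≤ γ) (hγ1 : γ < 1) (hβ : 0 < β) {L : ℝ} (hL : 0 ≤ L) :
    1 ≤ Qm γ β L := by
  rw [Qm, le_div_iff₀ (by linarith)]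
  have : 0 ≤ γ * (L / β) := by positivity
  linarith

lemma Qm_eq (hγ1 : γ < 1) {L : ℝ} : (1 - γ) * Qm γ β L = 1 + γ * (L / β) := by
  have hne : (1 : ℝ) - γ ≠ 0 := by linarith
  rw [Qm, mul_comm, div_mul_cancel₀ _ hne]

lemma abs_lse_le_Qm (hγ0 : 0 ≤ γ) (hγ1 : γ < 1) (hβ : 0 < β)
    {Q : S → A → ℝ} (hQ : ∀ s a, |Q s a| ≤ Qm γ β (Real.log (Fintype.card A)))
    (s' : S) : |lse β (Q s')| ≤ Qm γ β (Real.log (Fintype.card A)) +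
      Real.log (Fintype.card A) / β :=
  abs_lse_le hβ (fun b => hQ s' b)

lemma QT_bd (hα0 : 0 < α) (hα1 : α < 1) (hγ0 : 0 ≤ γ) (hγ1 : γ < 1) (hβ : 0 < β)
    (hr : ∀ s a s', |r s a s'| ≤ 1) (hQ0bd : ∀ s a, |Q0 s a| ≤ 1) :
    ∀ k (t : Fin k → S × A × S) s a,
      |QT α γ β r Q0 k t s a| ≤ Qm γ β (Real.log (Fintype.card A)) := by
  have hL : 0 ≤ Real.log (Fintype.card A) := by
    apply Real.log_nonneg; exact_mod_cast Fintype.card_pos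
  set L := Real.log (Fintype.card A) with hLdef
  intro k
  induction k with
  | zero => intro t s a; exact le_trans (hQ0bd s a) (Qm_ge_one hγ0 hγ1 hβ hL)
  | succ k ih =>
    intro t s a
    have hq := ih (Fin.init t)
    set Q := QT α γ β r Q0 k (Fin.init t) with hQdef
    have : QT α γ β r Q0 (k+1) t s a = stepQ α γ β r (t (Fin.last k)) Q s a := rfl
    rw [this, show (stepQ α γ β r (t (Fin.last k)) Q s a =
      stepQ α γ β r (t (Fin.last k)) Q (s, a).1 (s, a).2) from rfl,
      stepQ_eq (t (Fin.last k)) Q (s, a)]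
    set v := t (Fin.last k)
    by_cases h : (s, a) = (v.1, v.2.1)
    · rw [if_pos h]
      have hs : s = v.1 := by rw [Prod.ext_iff] at h; exact h.1
      have ha : a = v.2.1 := by rw [Prod.ext_iff] at h; exact h.2
      subst hs; subst ha
      have hb : |r v.1 v.2.1 v.2.2 + γ * lse β (Q v.2.2)| ≤ Qm γ β L := by
        have h1 := hr v.1 v.2.1 v.2.2
        have h2 := abs_lse_le hβ (fun b => hq v.2.2 b)
        have h4 := Qm_eq (β := β) hγ1 (L := L)
        have h1' := abs_le.mp h1
        have h2' := abs_le.mp h2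
        have u1 : γ * lse β (Q v.2.2) ≤ γ * (Qm γ β L + L / β) :=
          mul_le_mul_of_nonneg_left h2'.2 hγ0
        have u2 : γ * (-(Qm γ β L + L / β)) ≤ γ * lse β (Q v.2.2) :=
          mul_le_mul_of_nonneg_left h2'.1 hγ0
        rw [abs_le]
        constructor <;> nlinarith
      have habs := abs_add_le (Q v.1 v.2.1 * (1 - α))
        (α * (r v.1 v.2.1 v.2.2 + γ * lse β (Q v.2.2)))
      have h5 : |Q v.1 v.2.1 * (1-α)| = |Q v.1 v.2.1| * (1-α) := by
        rw [abs_mul, abs_of_nonneg (show (0:ℝ) ≤ 1 - α by linarith)]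
      have h6 : |α * (r v.1 v.2.1 v.2.2 + γ * lse β (Q v.2.2))| ≤ α * Qm γ β L := by
        rw [abs_mul, abs_of_nonneg hα0.le]
        exact mul_le_mul_of_nonneg_left hb hα0.le
      have h7 := hq v.1 v.2.1
      have heq : Q v.1 v.2.1 + α * (bfun γ β r Q (v.1, v.2.1) v.2.2) =
          Q v.1 v.2.1 * (1 - α) + α * (r v.1 v.2.1 v.2.2 + γ * lse β (Q v.2.2)) := by
        show Q v.1 v.2.1 + α * (r v.1 v.2.1 v.2.2 + γ * lse β (Q v.2.2) - Q v.1 v.2.1) = _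
        ring
      rw [heq]
      calc |Q v.1 v.2.1 * (1-α) + α * (r v.1 v.2.1 v.2.2 + γ * lse β (Q v.2.2))|
          ≤ |Q v.1 v.2.1 * (1-α)| + |α * (r v.1 v.2.1 v.2.2 + γ * lse β (Q v.2.2))| := habs
        _ ≤ Qm γ β L * (1-α) + α * Qm γ β L := by
            rw [h5]
            have : |Q v.1 v.2.1| * (1-α) ≤ Qm γ β L * (1-α) :=
              mul_le_mul_of_nonneg_right h7 (by linarith)
            linarith
        _ = Qm γ β L := by ring
    · rw [if_neg h]
      simpa using hq s a

lemma Qstar_bd (hγ0 : 0 ≤ γ) (hγ1 : γ < 1)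
    (hP0 : ∀ s a s', 0 ≤ P s a s') (hP1 : ∀ s a, ∑ s', P s a s' = 1)
    (hr : ∀ s a s', |r s a s'| ≤ 1)
    (hBell : ∀ s a, Qstar s a = (∑ s', P s a s' * r s a s') + γ * ∑ s', P s a s' *
      (Finset.univ.sup' Finset.univ_nonempty fun b => Qstar s' b)) :
    ∀ s a, |Qstar s a| ≤ 1 / (1 - γ) := by
  set M := NrmP (fun p : S × A => Qstar p.1 p.2) with hM
  have key : ∀ s a, |Qstar s a| ≤ 1 + γ * M := by
    intro s a
    rw [hBell s a]
    have h1 : |∑ s', P s a s' * r s a s'| ≤ 1 := by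
      calc |∑ s', P s a s' * r s a s'| ≤ ∑ s', |P s a s' * r s a s'| :=
            Finset.abs_sum_le_sum_abs _ _
        _ ≤ ∑ s', P s a s' * 1 := by
            apply Finset.sum_le_sum
            intro s' _
            rw [abs_mul, abs_of_nonneg (hP0 s a s')]
            exact mul_le_mul_of_nonneg_left (hr s a s') (hP0 s a s')
        _ = 1 := by simp [hP1 s a]
    have h2 : |∑ s', P s a s' * (Finset.univ.sup' Finset.univ_nonempty
        fun b => Qstar s' b)| ≤ M := by
      calc |∑ s', P s a s' * (Finset.univ.sup' Finset.univ_nonempty fun b => Qstar s' b)|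
          ≤ ∑ s', |P s a s' * (Finset.univ.sup' Finset.univ_nonempty fun b => Qstar s' b)| :=
            Finset.abs_sum_le_sum_abs _ _
        _ ≤ ∑ s', P s a s' * M := by
            apply Finset.sum_le_sum
            intro s' _
            rw [abs_mul, abs_of_nonneg (hP0 s a s')]
            apply mul_le_mul_of_nonneg_left _ (hP0 s a s')
            exact abs_mxA_le (fun b => abs_le_NrmP (fun p : S × A => Qstar p.1 p.2) (s', b))
        _ = M := by rw [← Finset.sum_mul, hP1 s a, one_mul]
    calc |(∑ s', P s a s' * r s a s') + γ * ∑ s', P s a s' *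
        (Finset.univ.sup' Finset.univ_nonempty fun b => Qstar s' b)|
        ≤ |∑ s', P s a s' * r s a s'| + |γ * ∑ s', P s a s' *
          (Finset.univ.sup' Finset.univ_nonempty fun b => Qstar s' b)| := abs_add_le _ _
      _ ≤ 1 + γ * M := by
          rw [abs_mul, abs_of_nonneg hγ0]
          exact add_le_add h1 (mul_le_mul_of_nonneg_left h2 hγ0)
  have hMle : M ≤ 1 + γ * M := NrmP_le (fun p => key p.1 p.2)
  have hMb : M ≤ 1 / (1 - γ) := by
    rw [le_div_iff₀ (by linarith)]
    nlinarith
  intro s a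
  exact le_trans (abs_le_NrmP (fun p : S × A => Qstar p.1 p.2) (s, a)) hMb

lemma bfun_bd (hγ0 : 0 ≤ γ) (hγ1 : γ < 1) (hβ : 0 < β)
    (hr : ∀ s a s', |r s a s'| ≤ 1)
    {Q : S → A → ℝ} (hQ : ∀ s a, |Q s a| ≤ Qm γ β (Real.log (Fintype.card A)))
    (p : S × A) (s' : S) :
    |bfun γ β r Q p s'| ≤ 2 * Qm γ β (Real.log (Fintype.card A)) := by
  set L := Real.log (Fintype.card A)
  have h1 := abs_le.mp (hr p.1 p.2 s')
  have h2 := abs_le.mp (abs_lse_le hβ (fun b => hQ s' b))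
  have h3 := abs_le.mp (hQ p.1 p.2)
  have h4 := Qm_eq (β := β) hγ1 (L := L)
  have u1 : γ * lse β (Q s') ≤ γ * (Qm γ β L + L / β) :=
    mul_le_mul_of_nonneg_left h2.2 hγ0
  have u2 : γ * (-(Qm γ β L + L / β)) ≤ γ * lse β (Q s') :=
    mul_le_mul_of_nonneg_left h2.1 hγ0
  rw [bfun, abs_le]
  constructor <;> nlinarith

lemma bbar_bd (hγ0 : 0 ≤ γ) (hγ1 : γ < 1) (hβ : 0 < β)
    (hP0 : ∀ s a s', 0 ≤ P s a s') (hP1 : ∀ s a, ∑ s', P s a s' = 1)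
    (hr : ∀ s a s', |r s a s'| ≤ 1)
    {Q : S → A → ℝ} (hQ : ∀ s a, |Q s a| ≤ Qm γ β (Real.log (Fintype.card A)))
    (p : S × A) :
    |bbar γ β P r Q p| ≤ 2 * Qm γ β (Real.log (Fintype.card A)) := by
  rw [bbar]
  calc |∑ s', P p.1 p.2 s' * bfun γ β r Q p s'|
      ≤ ∑ s', |P p.1 p.2 s' * bfun γ β r Q p s'| := Finset.abs_sum_le_sum_abs _ _
    _ ≤ ∑ s', P p.1 p.2 s' * (2 * Qm γ β (Real.log (Fintype.card A))) := by
        apply Finset.sum_le_sum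
        intro s' _
        rw [abs_mul, abs_of_nonneg (hP0 p.1 p.2 s')]
        exact mul_le_mul_of_nonneg_left (bfun_bd hγ0 hγ1 hβ hr hQ p s') (hP0 p.1 p.2 s')
    _ = 2 * Qm γ β (Real.log (Fintype.card A)) := by
        rw [← Finset.sum_mul, hP1 p.1 p.2, one_mul]

lemma bbar_eq (hP1 : ∀ s a, ∑ s', P s a s' = 1)
    (hBell : ∀ s a, Qstar s a = (∑ s', P s a s' * r s a s') + γ * ∑ s', P s a s' *
      (Finset.univ.sup' Finset.univ_nonempty fun b => Qstar s' b))
    (Q : S → A → ℝ) (p : S × A) :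
    bbar γ β P r Q p = Qstar p.1 p.2 - Q p.1 p.2 +
      γ * ∑ s', P p.1 p.2 s' * (lse β (Q s') - mxA (fun b => Qstar s' b)) := by
  have e1 : bbar γ β P r Q p = (∑ s', P p.1 p.2 s' * r p.1 p.2 s')
      + γ * (∑ s', P p.1 p.2 s' * lse β (Q s')) - Q p.1 p.2 := by
    rw [bbar]
    have : ∀ s', P p.1 p.2 s' * bfun γ β r Q p s' =
        P p.1 p.2 s' * r p.1 p.2 s' + γ * (P p.1 p.2 s' * lse β (Q s'))
          - P p.1 p.2 s' * Q p.1 p.2 := by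
      intro s'; rw [bfun]; ring
    rw [Finset.sum_congr rfl (fun s' _ => this s')]
    rw [Finset.sum_sub_distrib, Finset.sum_add_distrib, ← Finset.mul_sum,
      ← Finset.sum_mul, hP1 p.1 p.2, one_mul]
  have e2 : ∑ s', P p.1 p.2 s' * (lse β (Q s') - mxA (fun b => Qstar s' b)) =
      (∑ s', P p.1 p.2 s' * lse β (Q s'))
        - ∑ s', P p.1 p.2 s' * mxA (fun b => Qstar s' b) := by
    rw [← Finset.sum_sub_distrib]
    exact Finset.sum_congr rfl (fun s' _ => by ring)
  have e3 := hBell p.1 p.2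
  rw [e1, e2]
  have : (∑ s', P p.1 p.2 s' * mxA (fun b => Qstar s' b)) =
      ∑ s', P p.1 p.2 s' * (Finset.univ.sup' Finset.univ_nonempty fun b => Qstar s' b) := rfl
  rw [this]
  linarith [e3]

lemma eT_succ (hP1 : ∀ s a, ∑ s', P s a s' = 1)
    (hBell : ∀ s a, Qstar s a = (∑ s', P s a s' * r s a s') + γ * ∑ s', P s a s' *
      (Finset.univ.sup' Finset.univ_nonempty fun b => Qstar s' b))
    (k : ℕ) (t : Fin (k+1) → S × A × S) (p : S × A) :
    eT α γ β r Q0 Qstar (k+1) t p =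
      (1 - α * d p.1 p.2) * eT α γ β r Q0 Qstar k (Fin.init t) p
      + α * d p.1 p.2 * γ * (∑ s', P p.1 p.2 s' *
          (lse β (QT α γ β r Q0 k (Fin.init t) s') - mxA (fun b => Qstar s' b)))
      + α * wfun γ β P r d (QT α γ β r Q0 k (Fin.init t)) (t (Fin.last k)) p := by
  set Q := QT α γ β r Q0 k (Fin.init t) with hQdef
  have h1 : eT α γ β r Q0 Qstar (k+1) t p =
      Q p.1 p.2 + α * (if p = ((t (Fin.last k)).1, (t (Fin.last k)).2.1)
        then bfun γ β r Q p (t (Fin.last k)).2.2 else 0) - Qstar p.1 p.2 := by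
    rw [eT]
    have : QT α γ β r Q0 (k+1) t p.1 p.2 = stepQ α γ β r (t (Fin.last k)) Q p.1 p.2 := rfl
    rw [this, stepQ_eq]
  rw [h1, wfun, eT, bbar_eq hP1 hBell Q p]
  ring

/-! ### Sum machinery over the sample space -/

lemma sum_V_eq (F : S × A × S → ℝ) :
    ∑ v : S × A × S, F v = ∑ y : S × A, ∑ s', F (y.1, y.2, s') := by
  calc ∑ v : S × A × S, F v
      = ∑ z : (S × A) × S, F ((Equiv.prodAssoc S A S) z) :=
        (Equiv.sum_comp (Equiv.prodAssoc S A S) F).symm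
    _ = ∑ y : S × A, ∑ s', F ((Equiv.prodAssoc S A S) (y, s')) := Fintype.sum_prod_type _
    _ = ∑ y : S × A, ∑ s', F (y.1, y.2, s') := rfl

lemma qv_nonneg (hP0 : ∀ s a s', 0 ≤ P s a s') (hd0 : ∀ s a, 0 < d s a) (v : S × A × S) :
    0 ≤ qv P d v := mul_nonneg (hd0 _ _).le (hP0 _ _ _)

lemma sum_qv_one (hP1 : ∀ s a, ∑ s', P s a s' = 1) (hd1 : ∑ p : S × A, d p.1 p.2 = 1) :
    ∑ v : S × A × S, qv P d v = 1 := by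
  rw [sum_V_eq]
  have : ∀ y : S × A, ∑ s', qv P d (y.1, y.2, s') = d y.1 y.2 := by
    intro y
    have : ∀ s', qv P d (y.1, y.2, s') = d y.1 y.2 * P y.1 y.2 s' := fun s' => rfl
    rw [Finset.sum_congr rfl (fun s' _ => this s'), ← Finset.mul_sum, hP1, mul_one]
  rw [Finset.sum_congr rfl (fun y _ => this y), hd1]

lemma sum_qv_ite (g : S → ℝ) (p : S × A) :
    ∑ v : S × A × S, qv P d v * (if p = (v.1, v.2.1) then g v.2.2 else 0) =
      d p.1 p.2 * ∑ s', P p.1 p.2 s' * g s' := by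
  rw [sum_V_eq]
  have step1 : ∀ y : S × A, ∑ s', qv P d (y.1, y.2, s') *
      (if p = ((y.1, y.2, s').1, (y.1, y.2, s').2.1) then g (y.1, y.2, s').2.2 else 0) =
      (if p = y then ∑ s', d y.1 y.2 * (P y.1 y.2 s' * g s') else 0) := by
    intro y
    have hc : ∀ s' : S, ((y.1, y.2, s').1, (y.1, y.2, s').2.1) = y := by
      intro s'; exact Prod.mk.eta
    by_cases h : p = y
    · rw [if_pos h]
      apply Finset.sum_congr rfl
      intro s' _
      rw [hc s', if_pos h]
      show d y.1 y.2 * P y.1 y.2 s' * g s' = _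
      ring
    · rw [if_neg h]
      apply Finset.sum_eq_zero
      intro s' _
      rw [hc s', if_neg h, mul_zero]
  rw [Finset.sum_congr rfl (fun y _ => step1 y), Finset.sum_ite_eq]
  rw [if_pos (Finset.mem_univ p), ← Finset.mul_sum]

lemma sum_qv_wfun (hP1 : ∀ s a, ∑ s', P s a s' = 1) (hd1 : ∑ p : S × A, d p.1 p.2 = 1)
    (Q : S → A → ℝ) (p : S × A) :
    ∑ v : S × A × S, qv P d v * wfun γ β P r d Q v p = 0 := by
  have expand : ∀ v : S × A × S, qv P d v * wfun γ β P r d Q v p =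
      qv P d v * (if p = (v.1, v.2.1) then bfun γ β r Q p v.2.2 else 0)
      - qv P d v * (d p.1 p.2 * bbar γ β P r Q p) := by
    intro v; rw [wfun]; ring
  rw [Finset.sum_congr rfl (fun v _ => expand v), Finset.sum_sub_distrib]
  rw [sum_qv_ite (g := fun s' => bfun γ β r Q p s') p, ← Finset.sum_mul,
    sum_qv_one hP1 hd1, one_mul, bbar, sub_self]

lemma sum_qv_wsq (hP0 : ∀ s a s', 0 ≤ P s a s') (hP1 : ∀ s a, ∑ s', P s a s' = 1)
    (hd0 : ∀ s a, 0 < d s a) (hd1 : ∑ p : S × A, d p.1 p.2 = 1)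
    (Q : S → A → ℝ) {c : ℝ} (hc : 0 ≤ c)
    (hb : ∀ (p : S × A) s', |bfun γ β r Q p s'| ≤ c) :
    ∑ v : S × A × S, qv P d v * (∑ p : S × A, (wfun γ β P r d Q v p)^2) ≤ c^2 := by
  have swap : ∑ v : S × A × S, qv P d v * (∑ p : S × A, (wfun γ β P r d Q v p)^2) =
      ∑ p : S × A, ∑ v : S × A × S, qv P d v * (wfun γ β P r d Q v p)^2 := by
    rw [Finset.sum_comm]
    exact Finset.sum_congr rfl (fun v _ => Finset.mul_sum _ _ _)
  rw [swap]
  have key : ∀ p : S × A, ∑ v : S × A × S, qv P d v * (wfun γ β P r d Q v p)^2 ≤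
      d p.1 p.2 * c^2 := by
    intro p
    set D := d p.1 p.2 * bbar γ β P r Q p with hD
    have expand : ∀ v : S × A × S, qv P d v * (wfun γ β P r d Q v p)^2 =
        qv P d v * (if p = (v.1, v.2.1) then (bfun γ β r Q p v.2.2)^2 else 0)
        - 2 * D * (qv P d v * (if p = (v.1, v.2.1) then bfun γ β r Q p v.2.2 else 0))
        + D^2 * qv P d v := by
      intro v
      rw [wfun, ← hD]
      by_cases h : p = (v.1, v.2.1)
      · simp only [if_pos h]; ring
      · simp only [if_neg h]; ring
    have s1 : ∑ v : S × A × S, qv P d v *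
        (if p = (v.1, v.2.1) then (bfun γ β r Q p v.2.2)^2 else 0) =
        d p.1 p.2 * ∑ s', P p.1 p.2 s' * (bfun γ β r Q p s')^2 :=
      sum_qv_ite (g := fun s' => (bfun γ β r Q p s')^2) p
    have s2 : ∑ v : S × A × S, qv P d v *
        (if p = (v.1, v.2.1) then bfun γ β r Q p v.2.2 else 0) =
        d p.1 p.2 * ∑ s', P p.1 p.2 s' * bfun γ β r Q p s' :=
      sum_qv_ite (g := fun s' => bfun γ β r Q p s') p
    have s3 := sum_qv_one (P := P) (d := d) hP1 hd1
    have etot : ∑ v : S × A × S, qv P d v * (wfun γ β P r d Q v p)^2 =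
        d p.1 p.2 * (∑ s', P p.1 p.2 s' * (bfun γ β r Q p s')^2) - 2 * D * D + D^2 := by
      rw [Finset.sum_congr rfl (fun v _ => expand v), Finset.sum_add_distrib,
        Finset.sum_sub_distrib, s1]
      congr 1
      · congr 1
        rw [← Finset.mul_sum, s2, hD, bbar]
      · rw [← Finset.mul_sum, s3, mul_one]
    rw [etot]
    have h1 : ∑ s', P p.1 p.2 s' * (bfun γ β r Q p s')^2 ≤ c^2 := by
      calc ∑ s', P p.1 p.2 s' * (bfun γ β r Q p s')^2
          ≤ ∑ s', P p.1 p.2 s' * c^2 := by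
            apply Finset.sum_le_sum
            intro s' _
            apply mul_le_mul_of_nonneg_left _ (hP0 p.1 p.2 s')
            calc (bfun γ β r Q p s')^2 = |bfun γ β r Q p s'|^2 := (sq_abs _).symm
              _ ≤ c^2 := by
                  apply pow_le_pow_left₀ (abs_nonneg _) (hb p s')
        _ = c^2 := by rw [← Finset.sum_mul, hP1, one_mul]
    have h2 : 0 ≤ D^2 := sq_nonneg _
    have h3 : 0 < d p.1 p.2 := hd0 p.1 p.2
    nlinarith [mul_le_mul_of_nonneg_left h1 h3.le]
  calc ∑ p : S × A, ∑ v : S × A × S, qv P d v * (wfun γ β P r d Q v p)^2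
      ≤ ∑ p : S × A, d p.1 p.2 * c^2 := Finset.sum_le_sum (fun p _ => key p)
    _ = c^2 := by rw [← Finset.sum_mul, hd1, one_mul]

/-- one-step L2 contraction bound -/
lemma step_L2 (hP0 : ∀ s a s', 0 ≤ P s a s') (hP1 : ∀ s a, ∑ s', P s a s' = 1)
    (hd0 : ∀ s a, 0 < d s a) (hd1 : ∑ p : S × A, d p.1 p.2 = 1)
    {ρ : ℝ} (hρ0 : 0 ≤ ρ)
    (hcontr : ∀ p : S × A, 0 ≤ 1 - α * d p.1 p.2 ∧ 1 - α * d p.1 p.2 ≤ ρ)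
    (Q : S → A → ℝ) {c : ℝ} (hc : 0 ≤ c)
    (hb : ∀ (p : S × A) s', |bfun γ β r Q p s'| ≤ c)
    (xv : S × A → ℝ) :
    ∑ v : S × A × S, qv P d v *
        (∑ p : S × A, ((1 - α * d p.1 p.2) * xv p + α * wfun γ β P r d Q v p)^2) ≤
      ρ^2 * (∑ p : S × A, (xv p)^2) + α^2 * c^2 := by
  have expand : ∀ v : S × A × S,
      qv P d v * (∑ p : S × A, ((1 - α * d p.1 p.2) * xv p + α * wfun γ β P r d Q v p)^2) =
      qv P d v * (∑ p : S × A, ((1 - α * d p.1 p.2) * xv p)^2)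
      + (∑ p : S × A, 2 * α * ((1 - α * d p.1 p.2) * xv p) *
          (qv P d v * wfun γ β P r d Q v p))
      + α^2 * (qv P d v * ∑ p : S × A, (wfun γ β P r d Q v p)^2) := by
    intro v
    have : ∀ p : S × A, ((1 - α * d p.1 p.2) * xv p + α * wfun γ β P r d Q v p)^2 =
        ((1 - α * d p.1 p.2) * xv p)^2
        + 2 * α * ((1 - α * d p.1 p.2) * xv p) * wfun γ β P r d Q v p
        + α^2 * (wfun γ β P r d Q v p)^2 := fun p => by ring
    rw [Finset.sum_congr rfl (fun p _ => this p), Finset.sum_add_distrib,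
      Finset.sum_add_distrib, mul_add, mul_add]
    congr 1
    · congr 1
      rw [Finset.mul_sum]
      exact Finset.sum_congr rfl (fun p _ => by ring)
    · rw [show ∑ p : S × A, α^2 * (wfun γ β P r d Q v p)^2 =
        α^2 * ∑ p : S × A, (wfun γ β P r d Q v p)^2 from (Finset.mul_sum _ _ _).symm]
      ring
  rw [Finset.sum_congr rfl (fun v _ => expand v), Finset.sum_add_distrib,
    Finset.sum_add_distrib]
  have t1 : ∑ v : S × A × S, qv P d v * (∑ p : S × A, ((1 - α * d p.1 p.2) * xv p)^2) ≤
      ρ^2 * (∑ p : S × A, (xv p)^2) := by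
    have hin : (∑ p : S × A, ((1 - α * d p.1 p.2) * xv p)^2) ≤
        ρ^2 * (∑ p : S × A, (xv p)^2) := by
      rw [Finset.mul_sum]
      apply Finset.sum_le_sum
      intro p _
      have h := hcontr p
      have : ((1 - α * d p.1 p.2) * xv p)^2 = (1 - α * d p.1 p.2)^2 * (xv p)^2 := by ring
      rw [this]
      apply mul_le_mul_of_nonneg_right _ (sq_nonneg _)
      exact pow_le_pow_left₀ h.1 h.2 2
    calc ∑ v : S × A × S, qv P d v * (∑ p : S × A, ((1 - α * d p.1 p.2) * xv p)^2)
        ≤ ∑ v : S × A × S, qv P d v * (ρ^2 * (∑ p : S × A, (xv p)^2)) := by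
          apply Finset.sum_le_sum
          intro v _
          exact mul_le_mul_of_nonneg_left hin (qv_nonneg hP0 hd0 v)
      _ = ρ^2 * (∑ p : S × A, (xv p)^2) := by
          rw [← Finset.sum_mul, sum_qv_one hP1 hd1, one_mul]
  have t2 : ∑ v : S × A × S, (∑ p : S × A, 2 * α * ((1 - α * d p.1 p.2) * xv p) *
      (qv P d v * wfun γ β P r d Q v p)) = 0 := by
    rw [Finset.sum_comm]
    apply Finset.sum_eq_zero
    intro p _
    have : ∀ v : S × A × S, 2 * α * ((1 - α * d p.1 p.2) * xv p) *
        (qv P d v * wfun γ β P r d Q v p) =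
        (2 * α * ((1 - α * d p.1 p.2) * xv p)) * (qv P d v * wfun γ β P r d Q v p) :=
      fun v => by ring
    rw [Finset.sum_congr rfl (fun v _ => this v), ← Finset.mul_sum,
      sum_qv_wfun hP1 hd1 Q p, mul_zero]
  have t3 : ∑ v : S × A × S, α^2 * (qv P d v * ∑ p : S × A, (wfun γ β P r d Q v p)^2) ≤
      α^2 * c^2 := by
    rw [← Finset.mul_sum]
    exact mul_le_mul_of_nonneg_left (sum_qv_wsq hP0 hP1 hd0 hd1 Q hc hb) (sq_nonneg α)
  linarith

/-! ### snoc decomposition -/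

lemma sum_snoc {M : Type*} [AddCommMonoid M] (k : ℕ) (G : (Fin (k+1) → S × A × S) → M) :
    ∑ t, G t = ∑ h : Fin k → S × A × S, ∑ v : S × A × S, G (Fin.snoc h v) := by
  set e : ((Fin k → S × A × S) × (S × A × S)) → (Fin (k+1) → S × A × S) :=
    fun hv => Fin.snoc hv.1 hv.2 with he
  have hbij : Function.Bijective e := by
    rw [Function.bijective_iff_has_inverse]
    refine ⟨fun t => (Fin.init t, t (Fin.last k)), fun hv => ?_, fun t => ?_⟩
    · simp [he, Fin.init_snoc, Fin.snoc_last]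
    · simp [he, Fin.snoc_init_self]
  have hb := Fintype.sum_bijective e hbij (fun hv => G (e hv)) G (fun hv => rfl)
  calc ∑ t, G t = ∑ hv : (Fin k → S × A × S) × (S × A × S), G (e hv) := hb.symm
    _ = ∑ h : Fin k → S × A × S, ∑ v : S × A × S, G (e (h, v)) := Fintype.sum_prod_type _
    _ = ∑ h : Fin k → S × A × S, ∑ v : S × A × S, G (Fin.snoc h v) := rfl

lemma Wt_snoc (k : ℕ) (h : Fin k → S × A × S) (v : S × A × S) :
    Wt P d (k+1) (Fin.snoc h v) = Wt P d k h * qv P d v := by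
  rw [Wt, Wt, Fin.prod_univ_castSucc]
  simp [Fin.snoc_castSucc, Fin.snoc_last]

lemma Wt_nonneg (hP0 : ∀ s a s', 0 ≤ P s a s') (hd0 : ∀ s a, 0 < d s a)
    (k : ℕ) (t : Fin k → S × A × S) : 0 ≤ Wt P d k t :=
  Finset.prod_nonneg (fun j _ => qv_nonneg hP0 hd0 _)

lemma sum_Wt_one (hP0 : ∀ s a s', 0 ≤ P s a s') (hP1 : ∀ s a, ∑ s', P s a s' = 1)
    (hd0 : ∀ s a, 0 < d s a) (hd1 : ∑ p : S × A, d p.1 p.2 = 1) :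
    ∀ k : ℕ, ∑ t : Fin k → S × A × S, Wt P d k t = 1 := by
  intro k
  induction k with
  | zero =>
    rw [Fintype.sum_unique]
    simp [Wt]
  | succ k ih =>
    rw [sum_snoc k (Wt P d (k+1))]
    have : ∀ h : Fin k → S × A × S, ∑ v : S × A × S, Wt P d (k+1) (Fin.snoc h v) =
        Wt P d k h := by
      intro h
      rw [Finset.sum_congr rfl (fun v _ => Wt_snoc k h v), ← Finset.mul_sum,
        sum_qv_one hP1 hd1, mul_one]
    rw [Finset.sum_congr rfl (fun h _ => this h), ih]

/-! ### helper facts -/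

lemma d_le_one (hd0 : ∀ s a, 0 < d s a) (hd1 : ∑ p : S × A, d p.1 p.2 = 1)
    (p : S × A) : d p.1 p.2 ≤ 1 := by
  calc d p.1 p.2 ≤ ∑ q : S × A, d q.1 q.2 :=
        Finset.single_le_sum (f := fun q : S × A => d q.1 q.2)
          (fun q _ => (hd0 q.1 q.2).le) (Finset.mem_univ p)
    _ = 1 := hd1

lemma sqrt_add_le' {a b : ℝ} (ha : 0 ≤ a) (hb : 0 ≤ b) :
    Real.sqrt (a + b) ≤ Real.sqrt a + Real.sqrt b := by
  have h : a + b ≤ (Real.sqrt a + Real.sqrt b)^2 := by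
    nlinarith [Real.sq_sqrt ha, Real.sq_sqrt hb, Real.sqrt_nonneg a, Real.sqrt_nonneg b,
      mul_nonneg (Real.sqrt_nonneg a) (Real.sqrt_nonneg b)]
  calc Real.sqrt (a + b) ≤ Real.sqrt ((Real.sqrt a + Real.sqrt b)^2) := Real.sqrt_le_sqrt h
    _ = Real.sqrt a + Real.sqrt b := Real.sqrt_sq (by positivity)

/-! ### the one-step deterministic bound for the difference process -/

lemma diff_norm_step (hα0 : 0 < α) (hα1 : α < 1) (hγ0 : 0 ≤ γ) (hγ1 : γ < 1) (hβ : 0 < β)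
    (hP0 : ∀ s a s', 0 ≤ P s a s') (hP1 : ∀ s a, ∑ s', P s a s' = 1)
    (hd0 : ∀ s a, 0 < d s a) (hd1 : ∑ p : S × A, d p.1 p.2 = 1)
    (hBell : ∀ s a, Qstar s a = (∑ s', P s a s' * r s a s') + γ * ∑ s', P s a s' *
      (Finset.univ.sup' Finset.univ_nonempty fun b => Qstar s' b))
    {dmin dmax ρ : ℝ}
    (hdmin : ∀ p : S × A, dmin ≤ d p.1 p.2) (hdmax : ∀ p : S × A, d p.1 p.2 ≤ dmax)
    (hρ : ρ = 1 - α * dmin * (1 - γ))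
    (k : ℕ) (t : Fin (k+1) → S × A × S) :
    NrmP (fun p => eT α γ β r Q0 Qstar (k+1) t p - xT α γ β P r d Q0 Qstar (k+1) t p) ≤
      ρ * NrmP (fun p => eT α γ β r Q0 Qstar k (Fin.init t) p
          - xT α γ β P r d Q0 Qstar k (Fin.init t) p)
      + α * γ * dmax * (NrmP (xT α γ β P r d Q0 Qstar k (Fin.init t))
          + Real.log (Fintype.card A) / β) := by
  have hL0 : 0 ≤ Real.log (Fintype.card A) := by
    apply Real.log_nonneg; exact_mod_cast Fintype.card_pos
  set L := Real.log (Fintype.card A) with hLdef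
  set Q := QT α γ β r Q0 k (Fin.init t) with hQdef
  set Δ := NrmP (fun p => eT α γ β r Q0 Qstar k (Fin.init t) p
      - xT α γ β P r d Q0 Qstar k (Fin.init t) p) with hΔdef
  set Nx := NrmP (xT α γ β P r d Q0 Qstar k (Fin.init t)) with hNxdef
  have hΔ0 : 0 ≤ Δ := NrmP_nonneg _
  have hNx0 : 0 ≤ Nx := NrmP_nonneg _
  apply NrmP_le
  intro p
  have hrec : eT α γ β r Q0 Qstar (k+1) t p - xT α γ β P r d Q0 Qstar (k+1) t p =
      (1 - α * d p.1 p.2) * (eT α γ β r Q0 Qstar k (Fin.init t) p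
        - xT α γ β P r d Q0 Qstar k (Fin.init t) p)
      + α * d p.1 p.2 * γ * (∑ s', P p.1 p.2 s' *
          (lse β (Q s') - mxA (fun b => Qstar s' b))) := by
    have hx : xT α γ β P r d Q0 Qstar (k+1) t p =
        (1 - α * d p.1 p.2) * xT α γ β P r d Q0 Qstar k (Fin.init t) p
        + α * wfun γ β P r d Q (t (Fin.last k)) p := rfl
    rw [eT_succ hP1 hBell k t p, hx]
    ring
  rw [hrec]
  have hC : |∑ s', P p.1 p.2 s' * (lse β (Q s') - mxA (fun b => Qstar s' b))| ≤
      Δ + Nx + L / β := by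
    have hz : ∀ s', |lse β (Q s') - mxA (fun b => Qstar s' b)| ≤ Δ + Nx + L / β := by
      intro s'
      have he : ∀ b, |Q s' b - Qstar s' b| ≤ Δ + Nx := by
        intro b
        have h1 : Q s' b - Qstar s' b = eT α γ β r Q0 Qstar k (Fin.init t) (s', b) := rfl
        rw [h1]
        have h2 : |eT α γ β r Q0 Qstar k (Fin.init t) (s', b)| ≤
            |eT α γ β r Q0 Qstar k (Fin.init t) (s', b)
              - xT α γ β P r d Q0 Qstar k (Fin.init t) (s', b)|
            + |xT α γ β P r d Q0 Qstar k (Fin.init t) (s', b)| := by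
          have := abs_add_le (eT α γ β r Q0 Qstar k (Fin.init t) (s', b)
              - xT α γ β P r d Q0 Qstar k (Fin.init t) (s', b))
            (xT α γ β P r d Q0 Qstar k (Fin.init t) (s', b))
          simpa using this
        have h3 := abs_le_NrmP (fun p => eT α γ β r Q0 Qstar k (Fin.init t) p
            - xT α γ β P r d Q0 Qstar k (Fin.init t) p) (s', b)
        have h4 := abs_le_NrmP (xT α γ β P r d Q0 Qstar k (Fin.init t)) (s', b)
        rw [← hΔdef] at h3
        rw [← hNxdef] at h4
        calc |eT α γ β r Q0 Qstar k (Fin.init t) (s', b)| ≤ _ + _ := h2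
          _ ≤ Δ + Nx := add_le_add h3 h4
      have hz1 : |lse β (Q s') - lse β (Qstar s')| ≤ Δ + Nx :=
        abs_lse_sub_lse hβ (add_nonneg hΔ0 hNx0) he
      have hz2 : |lse β (Qstar s') - mxA (fun b => Qstar s' b)| ≤ L / β := by
        have a1 := mxA_le_lse hβ (Qstar s')
        have a2 := lse_le_mxA hβ (Qstar s')
        have hmx : mxA (fun b => Qstar s' b) = mxA (Qstar s') := rfl
        rw [hmx, abs_le]
        constructor
        · have : (0:ℝ) ≤ L / β := by positivity
          linarith
        · linarith
      calc |lse β (Q s') - mxA (fun b => Qstar s' b)| =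
          |(lse β (Q s') - lse β (Qstar s'))
            + (lse β (Qstar s') - mxA (fun b => Qstar s' b))| := by ring_nf
        _ ≤ |lse β (Q s') - lse β (Qstar s')|
            + |lse β (Qstar s') - mxA (fun b => Qstar s' b)| := abs_add_le _ _
        _ ≤ (Δ + Nx) + L / β := add_le_add hz1 hz2
    calc |∑ s', P p.1 p.2 s' * (lse β (Q s') - mxA (fun b => Qstar s' b))|
        ≤ ∑ s', |P p.1 p.2 s' * (lse β (Q s') - mxA (fun b => Qstar s' b))| :=
          Finset.abs_sum_le_sum_abs _ _
      _ ≤ ∑ s', P p.1 p.2 s' * (Δ + Nx + L / β) := by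
          apply Finset.sum_le_sum
          intro s' _
          rw [abs_mul, abs_of_nonneg (hP0 p.1 p.2 s')]
          exact mul_le_mul_of_nonneg_left (hz s') (hP0 p.1 p.2 s')
      _ = Δ + Nx + L / β := by rw [← Finset.sum_mul, hP1, one_mul]
  have hd1p : d p.1 p.2 ≤ 1 := d_le_one hd0 hd1 p
  have hdp0 : 0 < d p.1 p.2 := hd0 p.1 p.2
  have hcoef1 : 0 ≤ 1 - α * d p.1 p.2 := by nlinarith
  have habs : |(1 - α * d p.1 p.2) * (eT α γ β r Q0 Qstar k (Fin.init t) p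
        - xT α γ β P r d Q0 Qstar k (Fin.init t) p)
      + α * d p.1 p.2 * γ * (∑ s', P p.1 p.2 s' *
          (lse β (Q s') - mxA (fun b => Qstar s' b)))| ≤
      (1 - α * d p.1 p.2) * Δ + α * d p.1 p.2 * γ * (Δ + Nx + L / β) := by
    have u1 : |(1 - α * d p.1 p.2) * (eT α γ β r Q0 Qstar k (Fin.init t) p
        - xT α γ β P r d Q0 Qstar k (Fin.init t) p)| ≤ (1 - α * d p.1 p.2) * Δ := by
      rw [abs_mul, abs_of_nonneg hcoef1]
      apply mul_le_mul_of_nonneg_left _ hcoef1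
      exact abs_le_NrmP (fun p => eT α γ β r Q0 Qstar k (Fin.init t) p
        - xT α γ β P r d Q0 Qstar k (Fin.init t) p) p
    have u2 : |α * d p.1 p.2 * γ * (∑ s', P p.1 p.2 s' *
        (lse β (Q s') - mxA (fun b => Qstar s' b)))| ≤
        α * d p.1 p.2 * γ * (Δ + Nx + L / β) := by
      have hcoef2 : (0:ℝ) ≤ α * d p.1 p.2 * γ :=
        mul_nonneg (mul_nonneg hα0.le hdp0.le) hγ0
      rw [abs_mul, abs_of_nonneg hcoef2]
      exact mul_le_mul_of_nonneg_left hC hcoef2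
    calc _ ≤ _ + _ := abs_add_le _ _
      _ ≤ _ := add_le_add u1 u2
  apply le_trans habs
  have hdmin' := hdmin p
  have hdmax' := hdmax p
  have t1 : 0 ≤ α * (1 - γ) * (d p.1 p.2 - dmin) * Δ := by
    apply mul_nonneg _ hΔ0
    apply mul_nonneg (mul_nonneg hα0.le (by linarith)) (by linarith)
  have t2 : 0 ≤ α * γ * (dmax - d p.1 p.2) * (Nx + L / β) := by
    apply mul_nonneg
    · apply mul_nonneg (mul_nonneg hα0.le hγ0) (by linarith)
    · exact add_nonneg hNx0 (by positivity)
  rw [hρ]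
  nlinarith [t1, t2]

lemma pow_pred_mul (ρ : ℝ) : ∀ k : ℕ, (k:ℝ) * ρ^(k-1) * ρ = (k:ℝ) * ρ^k
  | 0 => by simp
  | (n+1) => by
    rw [Nat.add_sub_cancel, pow_succ]
    push_cast
    ring

/-- closed form for the second moment of the linear comparison process -/
lemma EM_bound (hα0 : 0 < α) (hα1 : α < 1) (hγ0 : 0 ≤ γ) (hγ1 : γ < 1) (hβ : 0 < β)
    (hP0 : ∀ s a s', 0 ≤ P s a s') (hP1 : ∀ s a, ∑ s', P s a s' = 1)
    (hd0 : ∀ s a, 0 < d s a) (hd1 : ∑ p : S × A, d p.1 p.2 = 1)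
    (hr : ∀ s a s', |r s a s'| ≤ 1) (hQ0bd : ∀ s a, |Q0 s a| ≤ 1)
    {dmin ρ : ℝ} (hdmin0 : 0 < dmin) (hdmin : ∀ p : S × A, dmin ≤ d p.1 p.2)
    (hρ : ρ = 1 - α * dmin * (1 - γ)) (hρ0 : 0 ≤ ρ) (hρ1 : ρ < 1) :
    ∀ k : ℕ, ∑ t : Fin k → S × A × S, Wt P d k t *
        (∑ p : S × A, (xT α γ β P r d Q0 Qstar k t p)^2) ≤
      ρ^(2*k) * (∑ p : S × A, (Q0 p.1 p.2 - Qstar p.1 p.2)^2)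
      + α^2 * (2 * Qm γ β (Real.log (Fintype.card A)))^2 / (1 - ρ^2) := by
  have hL0 : 0 ≤ Real.log (Fintype.card A) := by
    apply Real.log_nonneg; exact_mod_cast Fintype.card_pos
  set L := Real.log (Fintype.card A) with hLdef
  set c : ℝ := 2 * Qm γ β L with hcdef
  set M0 : ℝ := ∑ p : S × A, (Q0 p.1 p.2 - Qstar p.1 p.2)^2 with hM0def
  have hQm1 : (1:ℝ) ≤ Qm γ β L := Qm_ge_one hγ0 hγ1 hβ hL0
  have hc0 : 0 ≤ c := by rw [hcdef]; linarith
  have hρ2 : 0 < 1 - ρ^2 := by nlinarith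
  have hK0 : 0 ≤ α^2 * c^2 / (1 - ρ^2) := by positivity
  have hcontr : ∀ p : S × A, 0 ≤ 1 - α * d p.1 p.2 ∧ 1 - α * d p.1 p.2 ≤ ρ := by
    intro p
    have h1 := d_le_one hd0 hd1 p
    have h2 := hdmin p
    have h3 := (hd0 p.1 p.2).le
    constructor
    · nlinarith
    · have u : α * dmin ≤ α * d p.1 p.2 := mul_le_mul_of_nonneg_left h2 hα0.le
      have w : 0 ≤ α * dmin * γ := by positivity
      rw [hρ]; nlinarith
  intro k
  induction k with
  | zero =>
    have hx0 : ∀ t : Fin 0 → S × A × S,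
        (∑ p : S × A, (xT α γ β P r d Q0 Qstar 0 t p)^2) = M0 := fun t => rfl
    rw [Finset.sum_congr rfl (fun t _ => congrArg (Wt P d 0 t * ·) (hx0 t)),
      ← Finset.sum_mul, sum_Wt_one hP0 hP1 hd0 hd1 0, one_mul]
    simp only [Nat.mul_zero, pow_zero, one_mul]
    linarith
  | succ k ih =>
    have hxv : ∀ (h : Fin k → S × A × S) (v : S × A × S) (p : S × A),
        xT α γ β P r d Q0 Qstar (k+1) (Fin.snoc h v) p =
          (1 - α * d p.1 p.2) * xT α γ β P r d Q0 Qstar k h p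
          + α * wfun γ β P r d (QT α γ β r Q0 k h) v p := by
      intro h v p
      have e1 : Fin.init (Fin.snoc h v : Fin (k+1) → S × A × S) = h := by simp
      have e2 : (Fin.snoc h v : Fin (k+1) → S × A × S) (Fin.last k) = v := by simp
      show (1 - α * d p.1 p.2) * xT α γ β P r d Q0 Qstar k
            (Fin.init (Fin.snoc h v : Fin (k+1) → S × A × S)) p
          + α * wfun γ β P r d (QT α γ β r Q0 k
              (Fin.init (Fin.snoc h v : Fin (k+1) → S × A × S)))
            ((Fin.snoc h v : Fin (k+1) → S × A × S) (Fin.last k)) p =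
          (1 - α * d p.1 p.2) * xT α γ β P r d Q0 Qstar k h p
          + α * wfun γ β P r d (QT α γ β r Q0 k h) v p
      rw [e1, e2]
    rw [sum_snoc k (fun t => Wt P d (k+1) t *
      (∑ p : S × A, (xT α γ β P r d Q0 Qstar (k+1) t p)^2))]
    have key : ∀ h : Fin k → S × A × S,
        ∑ v : S × A × S, Wt P d (k+1) (Fin.snoc h v) *
          (∑ p : S × A, (xT α γ β P r d Q0 Qstar (k+1) (Fin.snoc h v) p)^2) ≤
        Wt P d k h * (ρ^2 * (∑ p : S × A, (xT α γ β P r d Q0 Qstar k h p)^2)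
          + α^2 * c^2) := by
      intro h
      have e1 : ∀ v : S × A × S, Wt P d (k+1) (Fin.snoc h v) *
          (∑ p : S × A, (xT α γ β P r d Q0 Qstar (k+1) (Fin.snoc h v) p)^2) =
          Wt P d k h * (qv P d v * (∑ p : S × A,
            ((1 - α * d p.1 p.2) * xT α γ β P r d Q0 Qstar k h p
              + α * wfun γ β P r d (QT α γ β r Q0 k h) v p)^2)) := by
        intro v
        rw [Wt_snoc, Finset.sum_congr rfl (fun p _ => by rw [hxv h v p])]
        ring
      rw [Finset.sum_congr rfl (fun v _ => e1 v), ← Finset.mul_sum]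
      apply mul_le_mul_of_nonneg_left _ (Wt_nonneg hP0 hd0 k h)
      exact step_L2 hP0 hP1 hd0 hd1 hρ0 hcontr (QT α γ β r Q0 k h) hc0
        (fun p s' => bfun_bd hγ0 hγ1 hβ hr
          (fun s a => QT_bd hα0 hα1 hγ0 hγ1 hβ hr hQ0bd k h s a) p s')
        (xT α γ β P r d Q0 Qstar k h)
    have tot : ∑ h : Fin k → S × A × S, ∑ v : S × A × S, Wt P d (k+1) (Fin.snoc h v) *
        (∑ p : S × A, (xT α γ β P r d Q0 Qstar (k+1) (Fin.snoc h v) p)^2) ≤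
        ρ^2 * (∑ h : Fin k → S × A × S, Wt P d k h *
          (∑ p : S × A, (xT α γ β P r d Q0 Qstar k h p)^2)) + α^2 * c^2 := by
      calc ∑ h : Fin k → S × A × S, ∑ v : S × A × S, Wt P d (k+1) (Fin.snoc h v) *
          (∑ p : S × A, (xT α γ β P r d Q0 Qstar (k+1) (Fin.snoc h v) p)^2)
          ≤ ∑ h : Fin k → S × A × S, Wt P d k h *
            (ρ^2 * (∑ p : S × A, (xT α γ β P r d Q0 Qstar k h p)^2) + α^2 * c^2) :=
            Finset.sum_le_sum (fun h _ => key h)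
        _ = ρ^2 * (∑ h : Fin k → S × A × S, Wt P d k h *
            (∑ p : S × A, (xT α γ β P r d Q0 Qstar k h p)^2))
            + α^2 * c^2 * (∑ h : Fin k → S × A × S, Wt P d k h) := by
            rw [Finset.mul_sum, Finset.mul_sum, ← Finset.sum_add_distrib]
            exact Finset.sum_congr rfl (fun h _ => by ring)
        _ = _ := by rw [sum_Wt_one hP0 hP1 hd0 hd1 k, mul_one]
    apply le_trans tot
    have hstep : ρ^2 * (∑ h : Fin k → S × A × S, Wt P d k h *
        (∑ p : S × A, (xT α γ β P r d Q0 Qstar k h p)^2)) ≤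
        ρ^2 * (ρ^(2*k) * M0 + α^2 * c^2 / (1 - ρ^2)) :=
      mul_le_mul_of_nonneg_left ih (sq_nonneg ρ)
    have hKey : ρ^2 * (α^2 * c^2 / (1 - ρ^2)) + α^2 * c^2 = α^2 * c^2 / (1 - ρ^2) := by
      field_simp
      ring
    have hpow : ρ^(2*(k+1)) = ρ^2 * ρ^(2*k) := by
      rw [show 2*(k+1) = 2 + 2*k from by ring, pow_add]
    rw [hpow]
    nlinarith [hstep, hKey]

/-- Cauchy–Schwarz for the weighted sums -/
lemma sum_Wt_NrmP_le_sqrt (hP0 : ∀ s a s', 0 ≤ P s a s')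
    (hP1 : ∀ s a, ∑ s', P s a s' = 1)
    (hd0 : ∀ s a, 0 < d s a) (hd1 : ∑ p : S × A, d p.1 p.2 = 1)
    (k : ℕ) (f : (Fin k → S × A × S) → S × A → ℝ) :
    ∑ t : Fin k → S × A × S, Wt P d k t * NrmP (f t) ≤
      Real.sqrt (∑ t : Fin k → S × A × S, Wt P d k t * ∑ p : S × A, (f t p)^2) := by
  have hW0 : ∀ t, 0 ≤ Wt P d k t := Wt_nonneg hP0 hd0 k
  have cs' : (∑ t : Fin k → S × A × S, Wt P d k t * NrmP (f t))^2 ≤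
      ∑ t : Fin k → S × A × S, Wt P d k t * (NrmP (f t))^2 := by
    have e1 : ∀ t, Wt P d k t * NrmP (f t) =
        Real.sqrt (Wt P d k t) * (Real.sqrt (Wt P d k t) * NrmP (f t)) := by
      intro t
      rw [← mul_assoc, Real.mul_self_sqrt (hW0 t)]
    calc (∑ t : Fin k → S × A × S, Wt P d k t * NrmP (f t))^2
        = (∑ t : Fin k → S × A × S, Real.sqrt (Wt P d k t) *
            (Real.sqrt (Wt P d k t) * NrmP (f t)))^2 := by
          rw [Finset.sum_congr rfl (fun t _ => e1 t)]
      _ ≤ (∑ t : Fin k → S × A × S, Real.sqrt (Wt P d k t)^2) *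
          (∑ t : Fin k → S × A × S, (Real.sqrt (Wt P d k t) * NrmP (f t))^2) :=
          Finset.sum_mul_sq_le_sq_mul_sq _ _ _
      _ = (∑ t : Fin k → S × A × S, Wt P d k t) *
          (∑ t : Fin k → S × A × S, Wt P d k t * (NrmP (f t))^2) := by
          congr 1
          · exact Finset.sum_congr rfl (fun t _ => Real.sq_sqrt (hW0 t))
          · apply Finset.sum_congr rfl
            intro t _
            rw [mul_pow, Real.sq_sqrt (hW0 t)]
      _ = ∑ t : Fin k → S × A × S, Wt P d k t * (NrmP (f t))^2 := by
          rw [sum_Wt_one hP0 hP1 hd0 hd1 k, one_mul]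
  have h4 : ∑ t : Fin k → S × A × S, Wt P d k t * (NrmP (f t))^2 ≤
      ∑ t : Fin k → S × A × S, Wt P d k t * ∑ p : S × A, (f t p)^2 :=
    Finset.sum_le_sum (fun t _ =>
      mul_le_mul_of_nonneg_left (NrmP_sq_le_sum_sq (f t)) (hW0 t))
  have h5 : 0 ≤ ∑ t : Fin k → S × A × S, Wt P d k t * NrmP (f t) :=
    Finset.sum_nonneg (fun t _ => mul_nonneg (hW0 t) (NrmP_nonneg _))
  calc ∑ t : Fin k → S × A × S, Wt P d k t * NrmP (f t)
      = Real.sqrt ((∑ t : Fin k → S × A × S, Wt P d k t * NrmP (f t))^2) :=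
        (Real.sqrt_sq h5).symm
    _ ≤ Real.sqrt (∑ t : Fin k → S × A × S, Wt P d k t * ∑ p : S × A, (f t p)^2) :=
        Real.sqrt_le_sqrt (le_trans cs' h4)

/-- bound on the expected sup norm of the comparison process -/
lemma EX_bound (hα0 : 0 < α) (hα1 : α < 1) (hγ0 : 0 ≤ γ) (hγ1 : γ < 1) (hβ : 0 < β)
    (hP0 : ∀ s a s', 0 ≤ P s a s') (hP1 : ∀ s a, ∑ s', P s a s' = 1)
    (hd0 : ∀ s a, 0 < d s a) (hd1 : ∑ p : S × A, d p.1 p.2 = 1)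
    (hr : ∀ s a s', |r s a s'| ≤ 1) (hQ0bd : ∀ s a, |Q0 s a| ≤ 1)
    {dmin ρ : ℝ} (hdmin0 : 0 < dmin) (hdmin : ∀ p : S × A, dmin ≤ d p.1 p.2)
    (hρ : ρ = 1 - α * dmin * (1 - γ)) (hρ0 : 0 ≤ ρ) (hρ1 : ρ < 1) (k : ℕ) :
    ∑ t : Fin k → S × A × S, Wt P d k t * NrmP (xT α γ β P r d Q0 Qstar k t) ≤
      ρ^k * Real.sqrt (∑ p : S × A, (Q0 p.1 p.2 - Qstar p.1 p.2)^2)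
      + α * (2 * Qm γ β (Real.log (Fintype.card A))) / Real.sqrt (1 - ρ^2) := by
  have hL0 : 0 ≤ Real.log (Fintype.card A) := by
    apply Real.log_nonneg; exact_mod_cast Fintype.card_pos
  set L := Real.log (Fintype.card A) with hLdef
  set c : ℝ := 2 * Qm γ β L with hcdef
  set M0 : ℝ := ∑ p : S × A, (Q0 p.1 p.2 - Qstar p.1 p.2)^2 with hM0def
  have hQm1 : (1:ℝ) ≤ Qm γ β L := Qm_ge_one hγ0 hγ1 hβ hL0
  have hc0 : 0 ≤ c := by rw [hcdef]; linarith
  have hρ2 : 0 < 1 - ρ^2 := by nlinarith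
  have hM00 : 0 ≤ M0 := Finset.sum_nonneg (fun p _ => sq_nonneg _)
  calc ∑ t : Fin k → S × A × S, Wt P d k t * NrmP (xT α γ β P r d Q0 Qstar k t)
      ≤ Real.sqrt (∑ t : Fin k → S × A × S, Wt P d k t *
          ∑ p : S × A, (xT α γ β P r d Q0 Qstar k t p)^2) :=
        sum_Wt_NrmP_le_sqrt hP0 hP1 hd0 hd1 k _
    _ ≤ Real.sqrt (ρ^(2*k) * M0 + α^2 * c^2 / (1 - ρ^2)) :=
        Real.sqrt_le_sqrt (EM_bound hα0 hα1 hγ0 hγ1 hβ hP0 hP1 hd0 hd1 hr hQ0bd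
          hdmin0 hdmin hρ hρ0 hρ1 k)
    _ ≤ Real.sqrt (ρ^(2*k) * M0) + Real.sqrt (α^2 * c^2 / (1 - ρ^2)) :=
        sqrt_add_le' (by positivity) (by positivity)
    _ = ρ^k * Real.sqrt M0 + α * c / Real.sqrt (1 - ρ^2) := by
        congr 1
        · have hpow : ρ^(2*k) = (ρ^k)^2 := by rw [← pow_mul, Nat.mul_comm]
          rw [hpow, Real.sqrt_mul (sq_nonneg _) M0, Real.sqrt_sq (pow_nonneg hρ0 k)]
        · rw [show α^2 * c^2 / (1 - ρ^2) = (α*c)^2 / (1 - ρ^2) from by ring,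
            Real.sqrt_div (by positivity) _, Real.sqrt_sq (by positivity)]

/-- closed form for the expected sup norm of the difference process -/
lemma EDel_bound (hα0 : 0 < α) (hα1 : α < 1) (hγ0 : 0 ≤ γ) (hγ1 : γ < 1) (hβ : 0 < β)
    (hP0 : ∀ s a s', 0 ≤ P s a s') (hP1 : ∀ s a, ∑ s', P s a s' = 1)
    (hd0 : ∀ s a, 0 < d s a) (hd1 : ∑ p : S × A, d p.1 p.2 = 1)
    (hr : ∀ s a s', |r s a s'| ≤ 1) (hQ0bd : ∀ s a, |Q0 s a| ≤ 1)
    (hBell : ∀ s a, Qstar s a = (∑ s', P s a s' * r s a s') + γ * ∑ s', P s a s' *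
      (Finset.univ.sup' Finset.univ_nonempty fun b => Qstar s' b))
    {dmin dmax ρ : ℝ} (hdmin0 : 0 < dmin)
    (hdmin : ∀ p : S × A, dmin ≤ d p.1 p.2) (hdmax : ∀ p : S × A, d p.1 p.2 ≤ dmax)
    (hρ : ρ = 1 - α * dmin * (1 - γ)) (hρ0 : 0 ≤ ρ) (hρ1 : ρ < 1) :
    ∀ k : ℕ, ∑ t : Fin k → S × A × S, Wt P d k t *
        NrmP (fun p => eT α γ β r Q0 Qstar k t p - xT α γ β P r d Q0 Qstar k t p) ≤
      α * γ * dmax * (Real.sqrt (∑ p : S × A, (Q0 p.1 p.2 - Qstar p.1 p.2)^2)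
          * k * ρ^(k-1)
        + (α * (2 * Qm γ β (Real.log (Fintype.card A))) / Real.sqrt (1 - ρ^2)
            + Real.log (Fintype.card A) / β) / (1 - ρ)) := by
  have hL0 : 0 ≤ Real.log (Fintype.card A) := by
    apply Real.log_nonneg; exact_mod_cast Fintype.card_pos
  set L := Real.log (Fintype.card A) with hLdef
  set c : ℝ := 2 * Qm γ β L with hcdef
  set M0 : ℝ := ∑ p : S × A, (Q0 p.1 p.2 - Qstar p.1 p.2)^2 with hM0def
  have hQm1 : (1:ℝ) ≤ Qm γ β L := Qm_ge_one hγ0 hγ1 hβ hL0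
  have hc0 : 0 ≤ c := by rw [hcdef]; linarith
  have hρ2 : 0 < 1 - ρ^2 := by nlinarith
  have hM00 : 0 ≤ M0 := Finset.sum_nonneg (fun p _ => sq_nonneg _)
  have hsM0 : 0 ≤ Real.sqrt M0 := Real.sqrt_nonneg _
  have h1ρ : 0 < 1 - ρ := by linarith
  have hCb0 : 0 ≤ α * c / Real.sqrt (1 - ρ^2) + L / β := by
    have u1 : 0 ≤ α * c / Real.sqrt (1 - ρ^2) := by positivity
    have u2 : 0 ≤ L / β := by positivity
    linarith
  have hdmax0 : 0 < dmax := lt_of_lt_of_le hdmin0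
    (le_trans (hdmin (Classical.arbitrary _)) (hdmax (Classical.arbitrary _)))
  have hcoef0 : 0 ≤ α * γ * dmax := by positivity
  intro k
  induction k with
  | zero =>
    have hz : ∀ t : Fin 0 → S × A × S,
        NrmP (fun p => eT α γ β r Q0 Qstar 0 t p - xT α γ β P r d Q0 Qstar 0 t p) = 0 := by
      intro t
      apply le_antisymm _ (NrmP_nonneg _)
      apply NrmP_le
      intro p
      show |(Q0 p.1 p.2 - Qstar p.1 p.2) - (Q0 p.1 p.2 - Qstar p.1 p.2)| ≤ 0
      simp
    rw [Finset.sum_congr rfl (fun t _ => by rw [hz t, mul_zero]), Finset.sum_const_zero]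
    apply mul_nonneg hcoef0
    simp only [Nat.cast_zero, mul_zero, zero_mul, zero_add]
    exact div_nonneg hCb0 h1ρ.le
  | succ k ih =>
    have hEX := EX_bound (Q0 := Q0) (Qstar := Qstar) hα0 hα1 hγ0 hγ1 hβ hP0 hP1 hd0 hd1 hr hQ0bd
      hdmin0 hdmin hρ hρ0 hρ1 k
    rw [← hM0def, ← hcdef] at hEX
    rw [sum_snoc k (fun t => Wt P d (k+1) t *
      NrmP (fun p => eT α γ β r Q0 Qstar (k+1) t p - xT α γ β P r d Q0 Qstar (k+1) t p))]
    have key : ∀ (h : Fin k → S × A × S) (v : S × A × S),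
        NrmP (fun p => eT α γ β r Q0 Qstar (k+1) (Fin.snoc h v) p
          - xT α γ β P r d Q0 Qstar (k+1) (Fin.snoc h v) p) ≤
        ρ * NrmP (fun p => eT α γ β r Q0 Qstar k h p - xT α γ β P r d Q0 Qstar k h p)
        + α * γ * dmax * (NrmP (xT α γ β P r d Q0 Qstar k h) + L / β) := by
      intro h v
      have hh := diff_norm_step (Q0 := Q0) (Qstar := Qstar) hα0 hα1 hγ0 hγ1 hβ hP0 hP1 hd0 hd1 hBell hdmin hdmax hρ
        k (Fin.snoc h v)
      rw [Fin.init_snoc] at hh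
      exact hh
    have per_h : ∀ h : Fin k → S × A × S,
        ∑ v : S × A × S, Wt P d (k+1) (Fin.snoc h v) *
          NrmP (fun p => eT α γ β r Q0 Qstar (k+1) (Fin.snoc h v) p
            - xT α γ β P r d Q0 Qstar (k+1) (Fin.snoc h v) p) ≤
        Wt P d k h * (ρ * NrmP (fun p => eT α γ β r Q0 Qstar k h p
            - xT α γ β P r d Q0 Qstar k h p)
          + α * γ * dmax * (NrmP (xT α γ β P r d Q0 Qstar k h) + L / β)) := by
      intro h
      have step1 : ∑ v : S × A × S, Wt P d (k+1) (Fin.snoc h v) *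
          NrmP (fun p => eT α γ β r Q0 Qstar (k+1) (Fin.snoc h v) p
            - xT α γ β P r d Q0 Qstar (k+1) (Fin.snoc h v) p) ≤
          ∑ v : S × A × S, Wt P d k h * qv P d v *
            (ρ * NrmP (fun p => eT α γ β r Q0 Qstar k h p
                - xT α γ β P r d Q0 Qstar k h p)
              + α * γ * dmax * (NrmP (xT α γ β P r d Q0 Qstar k h) + L / β)) := by
        apply Finset.sum_le_sum
        intro v _
        rw [Wt_snoc]
        exact mul_le_mul_of_nonneg_left (key h v)
          (mul_nonneg (Wt_nonneg hP0 hd0 k h) (qv_nonneg hP0 hd0 v))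
      apply le_trans step1
      have e2 : ∀ v : S × A × S, Wt P d k h * qv P d v *
          (ρ * NrmP (fun p => eT α γ β r Q0 Qstar k h p
              - xT α γ β P r d Q0 Qstar k h p)
            + α * γ * dmax * (NrmP (xT α γ β P r d Q0 Qstar k h) + L / β)) =
          (Wt P d k h * (ρ * NrmP (fun p => eT α γ β r Q0 Qstar k h p
              - xT α γ β P r d Q0 Qstar k h p)
            + α * γ * dmax * (NrmP (xT α γ β P r d Q0 Qstar k h) + L / β))) * qv P d v :=
        fun v => by ring
      rw [Finset.sum_congr rfl (fun v _ => e2 v), ← Finset.mul_sum,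
        sum_qv_one hP1 hd1, mul_one]
    calc ∑ h : Fin k → S × A × S, ∑ v : S × A × S, Wt P d (k+1) (Fin.snoc h v) *
          NrmP (fun p => eT α γ β r Q0 Qstar (k+1) (Fin.snoc h v) p
            - xT α γ β P r d Q0 Qstar (k+1) (Fin.snoc h v) p)
        ≤ ∑ h : Fin k → S × A × S, Wt P d k h *
            (ρ * NrmP (fun p => eT α γ β r Q0 Qstar k h p
                - xT α γ β P r d Q0 Qstar k h p)
              + α * γ * dmax * (NrmP (xT α γ β P r d Q0 Qstar k h) + L / β)) :=
          Finset.sum_le_sum (fun h _ => per_h h)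
      _ = ρ * (∑ h : Fin k → S × A × S, Wt P d k h *
            NrmP (fun p => eT α γ β r Q0 Qstar k h p - xT α γ β P r d Q0 Qstar k h p))
          + α * γ * dmax * ((∑ h : Fin k → S × A × S, Wt P d k h *
              NrmP (xT α γ β P r d Q0 Qstar k h)) + L / β) := by
          have e3 : ∀ h : Fin k → S × A × S, Wt P d k h *
              (ρ * NrmP (fun p => eT α γ β r Q0 Qstar k h p
                  - xT α γ β P r d Q0 Qstar k h p)
                + α * γ * dmax * (NrmP (xT α γ β P r d Q0 Qstar k h) + L / β)) =
              ρ * (Wt P d k h * NrmP (fun p => eT α γ β r Q0 Qstar k h p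
                  - xT α γ β P r d Q0 Qstar k h p))
              + α * γ * dmax * (Wt P d k h * NrmP (xT α γ β P r d Q0 Qstar k h))
              + (α * γ * dmax * (L / β)) * Wt P d k h := fun h => by ring
          rw [Finset.sum_congr rfl (fun h _ => e3 h), Finset.sum_add_distrib,
            Finset.sum_add_distrib, ← Finset.mul_sum, ← Finset.mul_sum, ← Finset.mul_sum,
            sum_Wt_one hP0 hP1 hd0 hd1 k, mul_one]
          ring
      _ ≤ ρ * (α * γ * dmax * (Real.sqrt M0 * k * ρ^(k-1)
            + (α * c / Real.sqrt (1 - ρ^2) + L / β) / (1 - ρ)))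
          + α * γ * dmax * ((ρ^k * Real.sqrt M0 + α * c / Real.sqrt (1 - ρ^2)) + L / β) := by
          apply add_le_add
          · exact mul_le_mul_of_nonneg_left ih hρ0
          · apply mul_le_mul_of_nonneg_left _ hcoef0
            exact add_le_add_left hEX _
      _ = α * γ * dmax * (Real.sqrt M0 * ((k+1 : ℕ) : ℝ) * ρ^((k+1)-1)
            + (α * c / Real.sqrt (1 - ρ^2) + L / β) / (1 - ρ)) := by
          rw [Nat.add_sub_cancel]
          push_cast
          have h1 : (k:ℝ) * ρ^(k-1) * ρ = (k:ℝ) * ρ^k := pow_pred_mul ρ k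
          have h2 : ρ * ((α * c / Real.sqrt (1 - ρ^2) + L / β) / (1 - ρ))
              + (α * c / Real.sqrt (1 - ρ^2) + L / β) =
              (α * c / Real.sqrt (1 - ρ^2) + L / β) / (1 - ρ) := by
            field_simp
            ring
          linear_combination (α * γ * dmax * Real.sqrt M0) * h1 + (α * γ * dmax) * h2

/-- the full algebraic bound for the expected sup-norm error -/
lemma Etar_bound (hα0 : 0 < α) (hα1 : α < 1) (hγ0 : 0 ≤ γ) (hγ1 : γ < 1) (hβ : 0 < β)
    (hP0 : ∀ s a s', 0 ≤ P s a s') (hP1 : ∀ s a, ∑ s', P s a s' = 1)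
    (hd0 : ∀ s a, 0 < d s a) (hd1 : ∑ p : S × A, d p.1 p.2 = 1)
    (hr : ∀ s a s', |r s a s'| ≤ 1) (hQ0bd : ∀ s a, |Q0 s a| ≤ 1)
    (hBell : ∀ s a, Qstar s a = (∑ s', P s a s' * r s a s') + γ * ∑ s', P s a s' *
      (Finset.univ.sup' Finset.univ_nonempty fun b => Qstar s' b))
    {dmin dmax ρ : ℝ} (hdmin0 : 0 < dmin)
    (hdmin : ∀ p : S × A, dmin ≤ d p.1 p.2) (hdmax : ∀ p : S × A, d p.1 p.2 ≤ dmax)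
    (hρ : ρ = 1 - α * dmin * (1 - γ)) (hρ0 : 0 ≤ ρ) (hρ1 : ρ < 1) (k : ℕ) :
    ∑ t : Fin k → S × A × S, Wt P d k t * NrmP (eT α γ β r Q0 Qstar k t) ≤
      (ρ^k * Real.sqrt (∑ p : S × A, (Q0 p.1 p.2 - Qstar p.1 p.2)^2)
        + α * (2 * Qm γ β (Real.log (Fintype.card A))) / Real.sqrt (1 - ρ^2))
      + α * γ * dmax * (Real.sqrt (∑ p : S × A, (Q0 p.1 p.2 - Qstar p.1 p.2)^2)
          * k * ρ^(k-1)
        + (α * (2 * Qm γ β (Real.log (Fintype.card A))) / Real.sqrt (1 - ρ^2)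
            + Real.log (Fintype.card A) / β) / (1 - ρ)) := by
  have htri : ∀ t : Fin k → S × A × S, NrmP (eT α γ β r Q0 Qstar k t) ≤
      NrmP (fun p => eT α γ β r Q0 Qstar k t p - xT α γ β P r d Q0 Qstar k t p)
      + NrmP (xT α γ β P r d Q0 Qstar k t) := by
    intro t
    apply NrmP_le
    intro p
    calc |eT α γ β r Q0 Qstar k t p| =
        |(eT α γ β r Q0 Qstar k t p - xT α γ β P r d Q0 Qstar k t p)
          + xT α γ β P r d Q0 Qstar k t p| := by ring_nf
      _ ≤ |eT α γ β r Q0 Qstar k t p - xT α γ β P r d Q0 Qstar k t p|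
          + |xT α γ β P r d Q0 Qstar k t p| := abs_add_le _ _
      _ ≤ _ := add_le_add
          (abs_le_NrmP (fun p => eT α γ β r Q0 Qstar k t p
            - xT α γ β P r d Q0 Qstar k t p) p)
          (abs_le_NrmP (xT α γ β P r d Q0 Qstar k t) p)
  have hsplit : ∑ t : Fin k → S × A × S, Wt P d k t * NrmP (eT α γ β r Q0 Qstar k t) ≤
      (∑ t : Fin k → S × A × S, Wt P d k t *
        NrmP (fun p => eT α γ β r Q0 Qstar k t p - xT α γ β P r d Q0 Qstar k t p))
      + ∑ t : Fin k → S × A × S, Wt P d k t * NrmP (xT α γ β P r d Q0 Qstar k t) := by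
    rw [← Finset.sum_add_distrib]
    apply Finset.sum_le_sum
    intro t _
    rw [← mul_add]
    exact mul_le_mul_of_nonneg_left (htri t) (Wt_nonneg hP0 hd0 k t)
  apply le_trans hsplit
  have h1 := EDel_bound (Q0 := Q0) (Qstar := Qstar) hα0 hα1 hγ0 hγ1 hβ hP0 hP1 hd0 hd1 hr hQ0bd hBell
    hdmin0 hdmin hdmax hρ hρ0 hρ1 k
  have h2 := EX_bound (Q0 := Q0) (Qstar := Qstar) hα0 hα1 hγ0 hγ1 hβ hP0 hP1 hd0 hd1 hr hQ0bd
    hdmin0 hdmin hρ hρ0 hρ1 k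
  linarith

lemma rpow_three_halves {x : ℝ} (hx : 0 ≤ x) : x ^ ((3:ℝ)/2) = x * Real.sqrt x := by
  rw [show (3:ℝ)/2 = 1 + 1/2 from by norm_num, Real.rpow_add' hx (by norm_num),
    Real.rpow_one, Real.sqrt_eq_rpow]

lemma rpow_five_halves {x : ℝ} (hx : 0 ≤ x) : x ^ ((5:ℝ)/2) = x^2 * Real.sqrt x := by
  rw [show (5:ℝ)/2 = 2 + 1/2 from by norm_num, Real.rpow_add' hx (by norm_num),
    Real.sqrt_eq_rpow, show ((2:ℝ) : ℝ) = ((2:ℕ) : ℝ) from by norm_num,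
    Real.rpow_natCast]

/-- the final numeric comparison -/
lemma final_numeric (α γ β L dmin dmax ρ nR M0s Qmv : ℝ) (k : ℕ)
    (hα0 : 0 < α) (hα1 : α < 1) (hγ0 : 0 ≤ γ) (hγ1 : γ < 1) (hβ : 0 < β) (hL0 : 0 ≤ L)
    (hdmin0 : 0 < dmin) (hdd : dmin ≤ dmax) (hdmax1 : dmax ≤ 1)
    (hρ : ρ = 1 - α * dmin * (1 - γ)) (hρ0 : 0 < ρ) (hρ1 : ρ < 1)
    (hn1 : 1 ≤ nR)
    (hM0s : 0 ≤ M0s) (hM0le : M0s ≤ Real.sqrt nR * (2 / (1 - γ)))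
    (hQm : Qmv = (1 + γ * (L / β)) / (1 - γ)) :
    (ρ^k * M0s + α * (2 * Qmv) / Real.sqrt (1 - ρ^2))
      + α * γ * dmax * (M0s * k * ρ^(k-1)
        + (α * (2 * Qmv) / Real.sqrt (1 - ρ^2) + L / β) / (1 - ρ)) ≤
    3 * Real.sqrt 6 * Real.sqrt α * dmax * (L + β) * nR
        / (β * dmin ^ ((3:ℝ)/2) * (1 - γ) ^ ((5:ℝ)/2))
      + 4 * α * γ * dmax * nR ^ ((3:ℝ)/2) * (k:ℝ) * ρ^(k-1) / (1 - γ)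
      + L / (β * dmin * (1 - γ))
      + 2 * nR ^ ((3:ℝ)/2) * ρ^k / (1 - γ) := by
  have hγ' : 0 < 1 - γ := by linarith
  have hdmax0 : 0 < dmax := lt_of_lt_of_le hdmin0 hdd
  have hsn0 : 0 ≤ Real.sqrt nR := Real.sqrt_nonneg _
  have hsn1 : 1 ≤ Real.sqrt nR := by
    rw [show (1:ℝ) = Real.sqrt 1 from Real.sqrt_one.symm]
    exact Real.sqrt_le_sqrt hn1
  have hn32 : nR ^ ((3:ℝ)/2) = nR * Real.sqrt nR := rpow_three_halves (by linarith)
  have hn320 : 0 ≤ nR ^ ((3:ℝ)/2) := by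
    rw [hn32]
    exact mul_nonneg (by linarith) hsn0
  have hsn_le : Real.sqrt nR ≤ nR ^ ((3:ℝ)/2) := by
    rw [hn32]
    nlinarith
  have hQm0 : 0 < Qmv := by
    rw [hQm]
    apply div_pos _ hγ'
    have : 0 ≤ γ * (L / β) := mul_nonneg hγ0 (div_nonneg hL0 hβ.le)
    linarith
  have hρ2 : 0 < 1 - ρ^2 := by nlinarith
  have hXnum : 0 ≤ α * (2 * Qmv) := mul_nonneg hα0.le (by linarith)
  have hX0 : 0 ≤ α * (2 * Qmv) / Real.sqrt (1 - ρ^2) :=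
    div_nonneg hXnum (Real.sqrt_nonneg _)
  have h1ρ : 1 - ρ = α * (dmin * (1 - γ)) := by rw [hρ]; ring
  have hE0 : 0 < dmin * (1 - γ) := mul_pos hdmin0 hγ'
  have h1ρ0 : 0 < 1 - ρ := by rw [h1ρ]; exact mul_pos hα0 hE0
  have hdivγ : (0:ℝ) ≤ 2 / (1 - γ) := div_nonneg (by norm_num) hγ'.le
  -- Term A vs T4
  have hTA : ρ^k * M0s ≤ 2 * nR ^ ((3:ℝ)/2) * ρ^k / (1 - γ) := by
    have h1 : ρ^k * M0s ≤ ρ^k * (Real.sqrt nR * (2 / (1 - γ))) :=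
      mul_le_mul_of_nonneg_left hM0le (pow_nonneg hρ0.le k)
    have h2 : ρ^k * (Real.sqrt nR * (2 / (1 - γ))) ≤
        ρ^k * (nR ^ ((3:ℝ)/2) * (2 / (1 - γ))) := by
      apply mul_le_mul_of_nonneg_left _ (pow_nonneg hρ0.le k)
      exact mul_le_mul_of_nonneg_right hsn_le hdivγ
    calc ρ^k * M0s ≤ ρ^k * (nR ^ ((3:ℝ)/2) * (2 / (1 - γ))) := le_trans h1 h2
      _ = 2 * nR ^ ((3:ℝ)/2) * ρ^k / (1 - γ) := by ring
  -- Term B vs T2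
  have hTB : α * γ * dmax * (M0s * k * ρ^(k-1)) ≤
      4 * α * γ * dmax * nR ^ ((3:ℝ)/2) * (k:ℝ) * ρ^(k-1) / (1 - γ) := by
    have hc0 : 0 ≤ α * γ * dmax * ((k:ℝ) * ρ^(k-1)) :=
      mul_nonneg (mul_nonneg (mul_nonneg hα0.le hγ0) hdmax0.le)
        (mul_nonneg (Nat.cast_nonneg k) (pow_nonneg hρ0.le _))
    have h1 : M0s ≤ 4 * nR ^ ((3:ℝ)/2) / (1 - γ) := by
      have e : Real.sqrt nR * (2 / (1 - γ)) = 2 * Real.sqrt nR / (1 - γ) := by ring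
      have e2 : (2:ℝ) * Real.sqrt nR ≤ 4 * nR ^ ((3:ℝ)/2) := by nlinarith
      calc M0s ≤ Real.sqrt nR * (2 / (1 - γ)) := hM0le
        _ = 2 * Real.sqrt nR / (1 - γ) := e
        _ ≤ 4 * nR ^ ((3:ℝ)/2) / (1 - γ) := (div_le_div_iff_of_pos_right hγ').mpr e2
    calc α * γ * dmax * (M0s * k * ρ^(k-1))
        = (α * γ * dmax * ((k:ℝ) * ρ^(k-1))) * M0s := by ring
      _ ≤ (α * γ * dmax * ((k:ℝ) * ρ^(k-1))) * (4 * nR ^ ((3:ℝ)/2) / (1 - γ)) :=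
          mul_le_mul_of_nonneg_left h1 hc0
      _ = 4 * α * γ * dmax * nR ^ ((3:ℝ)/2) * (k:ℝ) * ρ^(k-1) / (1 - γ) := by ring
  -- Term C vs T3
  have hTC : α * γ * dmax * ((L / β) / (1 - ρ)) ≤ L / (β * dmin * (1 - γ)) := by
    rw [h1ρ]
    have he : α * γ * dmax * ((L / β) / (α * (dmin * (1 - γ)))) =
        (γ * dmax) * (L / (β * dmin * (1 - γ))) := by
      field_simp [ne_of_gt hα0, ne_of_gt hβ, ne_of_gt hdmin0, ne_of_gt hγ']
    rw [he]
    have hL3 : 0 ≤ L / (β * dmin * (1 - γ)) :=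
      div_nonneg hL0 (mul_nonneg (mul_nonneg hβ.le hdmin0.le) hγ'.le)
    have hgd : γ * dmax ≤ 1 := by nlinarith
    calc (γ * dmax) * (L / (β * dmin * (1 - γ)))
        ≤ 1 * (L / (β * dmin * (1 - γ))) := mul_le_mul_of_nonneg_right hgd hL3
      _ = L / (β * dmin * (1 - γ)) := one_mul _
  -- Term D vs T1
  have hsqE : Real.sqrt (1 - ρ) = Real.sqrt α * Real.sqrt (dmin * (1 - γ)) := by
    rw [h1ρ, Real.sqrt_mul hα0.le]
  have hsqrtE0 : 0 < Real.sqrt (dmin * (1 - γ)) := Real.sqrt_pos.mpr hE0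
  have hsqα0 : 0 < Real.sqrt α := Real.sqrt_pos.mpr hα0
  have hmono : Real.sqrt (1 - ρ) ≤ Real.sqrt (1 - ρ^2) := Real.sqrt_le_sqrt (by nlinarith)
  have hs1ρ0 : 0 < Real.sqrt (1 - ρ) := Real.sqrt_pos.mpr h1ρ0
  have hXle : α * (2 * Qmv) / Real.sqrt (1 - ρ^2) ≤ α * (2 * Qmv) / Real.sqrt (1 - ρ) :=
    div_le_div_of_nonneg_left hXnum hs1ρ0 hmono
  have hαdiv : α / Real.sqrt (1 - ρ) = Real.sqrt α / Real.sqrt (dmin * (1 - γ)) := by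
    rw [hsqE, div_mul_eq_div_div, Real.div_sqrt]
  have hX2 : α * (2 * Qmv) / Real.sqrt (1 - ρ) =
      2 * Qmv * (Real.sqrt α / Real.sqrt (dmin * (1 - γ))) := by
    rw [← hαdiv]
    ring
  have hcoef_nn : 0 ≤ α * γ * dmax / (1 - ρ) :=
    div_nonneg (mul_nonneg (mul_nonneg hα0.le hγ0) hdmax0.le) h1ρ0.le
  have hcoefle : 1 + α * γ * dmax / (1 - ρ) ≤ 2 * dmax / (dmin * (1 - γ)) := by
    rw [h1ρ]
    have e : α * γ * dmax / (α * (dmin * (1 - γ))) = γ * dmax / (dmin * (1 - γ)) := by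
      rw [show α * γ * dmax = α * (γ * dmax) from by ring,
        mul_div_mul_left _ _ (ne_of_gt hα0)]
    rw [e]
    have h2 : dmin * (1 - γ) + γ * dmax ≤ 2 * dmax := by nlinarith
    calc 1 + γ * dmax / (dmin * (1 - γ))
        = (dmin * (1 - γ) + γ * dmax) / (dmin * (1 - γ)) := by
          field_simp [ne_of_gt hE0]
      _ ≤ 2 * dmax / (dmin * (1 - γ)) := (div_le_div_iff_of_pos_right hE0).mpr h2
  have hQmle : Qmv ≤ (L + β) / (β * (1 - γ)) := by
    rw [hQm, div_le_div_iff₀ hγ' (mul_pos hβ hγ')]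
    have e : (1 + γ * (L / β)) * (β * (1 - γ)) = (β + γ * L) * (1 - γ) := by
      field_simp [ne_of_gt hβ]
    rw [e]
    nlinarith [mul_nonneg hγ'.le (by nlinarith : (0:ℝ) ≤ L - γ * L)]
  have h6 : (2:ℝ) ≤ Real.sqrt 6 := by
    have h4 : Real.sqrt 4 = 2 := by
      rw [show (4:ℝ) = 2^2 from by norm_num]
      exact Real.sqrt_sq (by norm_num)
    calc (2:ℝ) = Real.sqrt 4 := h4.symm
      _ ≤ Real.sqrt 6 := Real.sqrt_le_sqrt (by norm_num)
  have h46 : (4:ℝ) ≤ 3 * Real.sqrt 6 * nR := by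
    nlinarith [mul_le_mul_of_nonneg_right h6 (by linarith : (0:ℝ) ≤ nR)]
  have hsqdmin0 : 0 < Real.sqrt dmin := Real.sqrt_pos.mpr hdmin0
  have hsqγ0 : 0 < Real.sqrt (1 - γ) := Real.sqrt_pos.mpr hγ'
  have hseq : Real.sqrt (dmin * (1 - γ)) = Real.sqrt dmin * Real.sqrt (1 - γ) :=
    Real.sqrt_mul hdmin0.le _
  set Z : ℝ := Real.sqrt α * dmax * (L + β) /
      (β * (dmin * Real.sqrt dmin) * ((1 - γ)^2 * Real.sqrt (1 - γ))) with hZdef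
  have hZ0 : 0 ≤ Z := by
    rw [hZdef]
    apply div_nonneg
    · exact mul_nonneg (mul_nonneg (Real.sqrt_nonneg _) hdmax0.le) (by linarith)
    · exact mul_nonneg (mul_nonneg hβ.le (mul_nonneg hdmin0.le (Real.sqrt_nonneg _)))
        (mul_nonneg (sq_nonneg _) (Real.sqrt_nonneg _))
  have hTD : α * (2 * Qmv) / Real.sqrt (1 - ρ^2)
      + α * γ * dmax * ((α * (2 * Qmv) / Real.sqrt (1 - ρ^2)) / (1 - ρ)) ≤
      3 * Real.sqrt 6 * Real.sqrt α * dmax * (L + β) * nR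
        / (β * dmin ^ ((3:ℝ)/2) * (1 - γ) ^ ((5:ℝ)/2)) := by
    have e1 : α * (2 * Qmv) / Real.sqrt (1 - ρ^2)
        + α * γ * dmax * ((α * (2 * Qmv) / Real.sqrt (1 - ρ^2)) / (1 - ρ)) =
        (α * (2 * Qmv) / Real.sqrt (1 - ρ^2)) * (1 + α * γ * dmax / (1 - ρ)) := by ring
    rw [e1]
    have hb0 : 0 ≤ α * (2 * Qmv) / Real.sqrt (1 - ρ) :=
      div_nonneg hXnum (Real.sqrt_nonneg _)
    have step1 : (α * (2 * Qmv) / Real.sqrt (1 - ρ^2)) * (1 + α * γ * dmax / (1 - ρ)) ≤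
        (α * (2 * Qmv) / Real.sqrt (1 - ρ)) * (2 * dmax / (dmin * (1 - γ))) :=
      mul_le_mul hXle hcoefle (by linarith) hb0
    apply le_trans step1
    rw [hX2]
    have hdd0 : 0 ≤ 2 * dmax / (dmin * (1 - γ)) :=
      div_nonneg (by linarith) hE0.le
    have step2 : 2 * Qmv * (Real.sqrt α / Real.sqrt (dmin * (1 - γ))) *
        (2 * dmax / (dmin * (1 - γ))) ≤
        2 * ((L + β) / (β * (1 - γ))) * (Real.sqrt α / Real.sqrt (dmin * (1 - γ))) *
        (2 * dmax / (dmin * (1 - γ))) := by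
      apply mul_le_mul_of_nonneg_right _ hdd0
      apply mul_le_mul_of_nonneg_right _
        (div_nonneg (Real.sqrt_nonneg _) (Real.sqrt_nonneg _))
      linarith [hQmle]
    apply le_trans step2
    have e3 : 2 * ((L + β) / (β * (1 - γ))) * (Real.sqrt α / Real.sqrt (dmin * (1 - γ))) *
        (2 * dmax / (dmin * (1 - γ))) = 4 * Z := by
      rw [hZdef, hseq]
      field_simp [ne_of_gt hβ, ne_of_gt hγ', ne_of_gt hdmin0,
        ne_of_gt hsqdmin0, ne_of_gt hsqγ0]
      ring
    have e4 : 3 * Real.sqrt 6 * Real.sqrt α * dmax * (L + β) * nR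
        / (β * dmin ^ ((3:ℝ)/2) * (1 - γ) ^ ((5:ℝ)/2)) = (3 * Real.sqrt 6 * nR) * Z := by
      rw [hZdef, rpow_three_halves hdmin0.le, rpow_five_halves hγ'.le]
      field_simp [ne_of_gt hβ, ne_of_gt hγ', ne_of_gt hdmin0,
        ne_of_gt hsqdmin0, ne_of_gt hsqγ0]
    rw [e3, e4]
    exact mul_le_mul_of_nonneg_right h46 hZ0
  -- conclusion
  have hsplit : (α * (2 * Qmv) / Real.sqrt (1 - ρ^2) + L / β) / (1 - ρ) =
      (α * (2 * Qmv) / Real.sqrt (1 - ρ^2)) / (1 - ρ) + (L / β) / (1 - ρ) :=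
    add_div _ _ _
  rw [hsplit]
  linarith [hTA, hTB, hTC, hTD]

end DetLemmas

end LSEQ

/-- **Finite-time error bound of LSE soft Q-learning** (Theorem on the LSE iterates):
`E[‖Q_k^{LSE} − Q*‖_∞] ≤ 3√6·α^{1/2}·d_max·(log|A|+β)·n/(β·d_min^{3/2}·(1−γ)^{5/2})
 + 4·α·γ·d_max·n^{3/2}·k·ρ^{k−1}/(1−γ) + log|A|/(β·d_min·(1−γ)) + 2·n^{3/2}·ρ^k/(1−γ)`. -/
theorem lse_soft_q_learning_finite_time_bound {S A : Type*} [Fintype S] [Fintype A]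
    [Nonempty S] [Nonempty A] [DecidableEq S] [DecidableEq A]
    {Ω : Type*} [MeasurableSpace Ω] (μ : Measure Ω) [IsProbabilityMeasure μ]
    (α γ β : ℝ) (hα : α ∈ Set.Ioo (0 : ℝ) 1) (hγ : γ ∈ Set.Ico (0 : ℝ) 1) (hβ : 0 < β)
    (P : S → A → S → ℝ) (hP0 : ∀ s a s', 0 ≤ P s a s') (hP1 : ∀ s a, ∑ s', P s a s' = 1)
    (r : S → A → S → ℝ) (hr : ∀ s a s', |r s a s'| ≤ 1)
    (d : S → A → ℝ) (hd0 : ∀ s a, 0 < d s a) (hd1 : ∑ p : S × A, d p.1 p.2 = 1)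
    (dmin : ℝ)
    (hdmin : dmin = Finset.univ.inf' Finset.univ_nonempty fun p : S × A => d p.1 p.2)
    (dmax : ℝ)
    (hdmax : dmax = Finset.univ.sup' Finset.univ_nonempty fun p : S × A => d p.1 p.2)
    (ρ : ℝ) (hρ : ρ = 1 - α * dmin * (1 - γ))
    (nR : ℝ) (hn : nR = (Fintype.card S * Fintype.card A : ℝ))
    (Qstar : S → A → ℝ)
    (hBell : ∀ s a, Qstar s a = (∑ s', P s a s' * r s a s') + γ * ∑ s', P s a s' *
      (Finset.univ.sup' Finset.univ_nonempty fun b => Qstar s' b))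
    (ξ : ℕ → Ω → S × A × S)
    (hindep : iIndepFun (m := fun _ : ℕ => (⊤ : MeasurableSpace (S × A × S))) ξ μ)
    (hdist : ∀ k s a s', μ {ω | ξ k ω = (s, a, s')} = ENNReal.ofReal (d s a * P s a s'))
    (QLSE : ℕ → Ω → S → A → ℝ) (Q0 : S → A → ℝ) (hQ0bd : ∀ s a, |Q0 s a| ≤ 1)
    (hQLSE0 : ∀ ω, QLSE 0 ω = Q0)
    (hQLSErec : ∀ k ω s a, QLSE (k + 1) ω s a = QLSE k ω s a +
      α * (if (s, a) = ((ξ k ω).1, (ξ k ω).2.1) then (1 : ℝ) else 0) *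
        (r (ξ k ω).1 (ξ k ω).2.1 (ξ k ω).2.2
          + γ * ((1 / β) * Real.log (∑ b, Real.exp (β * QLSE k ω (ξ k ω).2.2 b)))
          - QLSE k ω (ξ k ω).1 (ξ k ω).2.1)) :
    ∀ k, ∫ ω, (Finset.univ.sup' Finset.univ_nonempty
        fun p : S × A => |QLSE k ω p.1 p.2 - Qstar p.1 p.2|) ∂μ ≤
      3 * Real.sqrt 6 * Real.sqrt α * dmax * (Real.log (Fintype.card A) + β) * nR
          / (β * dmin ^ ((3 : ℝ) / 2) * (1 - γ) ^ ((5 : ℝ) / 2))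
        + 4 * α * γ * dmax * nR ^ ((3 : ℝ) / 2) * (k : ℝ) * ρ ^ (k - 1) / (1 - γ)
        + Real.log (Fintype.card A) / (β * dmin * (1 - γ))
        + 2 * nR ^ ((3 : ℝ) / 2) * ρ ^ k / (1 - γ) := by
  classical
  obtain ⟨hα0, hα1⟩ := hα
  obtain ⟨hγ0, hγ1⟩ := hγ
  have hγ' : (0:ℝ) < 1 - γ := by linarith
  have hL0 : 0 ≤ Real.log (Fintype.card A) := by
    apply Real.log_nonneg; exact_mod_cast Fintype.card_pos
  -- basic facts about d, ρ, nR
  have hdminle : ∀ p : S × A, dmin ≤ d p.1 p.2 := by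
    intro p; rw [hdmin]; exact Finset.inf'_le _ (Finset.mem_univ p)
  have hdmin0 : 0 < dmin := by
    rw [hdmin, Finset.lt_inf'_iff]; exact fun p _ => hd0 p.1 p.2
  have hdmaxge : ∀ p : S × A, d p.1 p.2 ≤ dmax := by
    intro p; rw [hdmax]; exact Finset.le_sup' (fun p : S × A => d p.1 p.2) (Finset.mem_univ p)
  have hdmax1 : dmax ≤ 1 := by
    rw [hdmax]; exact Finset.sup'_le _ _ fun p _ => LSEQ.d_le_one hd0 hd1 p
  have hdd : dmin ≤ dmax :=
    le_trans (hdminle (Classical.arbitrary _)) (hdmaxge (Classical.arbitrary _))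
  have hdmax0 : 0 < dmax := lt_of_lt_of_le hdmin0 hdd
  have hdmin1 : dmin ≤ 1 := le_trans hdd hdmax1
  have hρ0 : 0 < ρ := by
    rw [hρ]
    have h1 : dmin * (1 - γ) ≤ 1 := by nlinarith
    have h2 : α * (dmin * (1 - γ)) ≤ α * 1 := mul_le_mul_of_nonneg_left h1 hα0.le
    nlinarith
  have hρ1 : ρ < 1 := by
    rw [hρ]
    nlinarith [mul_pos (mul_pos hα0 hdmin0) hγ']
  have hn1 : (1:ℝ) ≤ nR := by
    rw [hn]
    have h1 : (1:ℝ) ≤ (Fintype.card S : ℝ) := by exact_mod_cast Fintype.card_pos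
    have h2 : (1:ℝ) ≤ (Fintype.card A : ℝ) := by exact_mod_cast Fintype.card_pos
    nlinarith
  -- M0 facts
  have hM00 : 0 ≤ ∑ p : S × A, (Q0 p.1 p.2 - Qstar p.1 p.2)^2 :=
    Finset.sum_nonneg (fun p _ => sq_nonneg _)
  have hQsb : ∀ s a, |Qstar s a| ≤ 1 / (1 - γ) :=
    LSEQ.Qstar_bd hγ0 hγ1 hP0 hP1 hr hBell
  have hM0le : (∑ p : S × A, (Q0 p.1 p.2 - Qstar p.1 p.2)^2) ≤ nR * (2 / (1-γ))^2 := by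
    have hone : (1:ℝ) ≤ 1 / (1 - γ) := by
      rw [le_div_iff₀ hγ']; linarith
    have hper : ∀ p : S × A, (Q0 p.1 p.2 - Qstar p.1 p.2)^2 ≤ (2 / (1-γ))^2 := by
      intro p
      have h1 : |Q0 p.1 p.2 - Qstar p.1 p.2| ≤ 2 / (1-γ) := by
        have ha := hQ0bd p.1 p.2
        have hb := hQsb p.1 p.2
        have := abs_sub (Q0 p.1 p.2) (Qstar p.1 p.2)
        calc |Q0 p.1 p.2 - Qstar p.1 p.2| ≤ |Q0 p.1 p.2| + |Qstar p.1 p.2| :=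
              abs_sub _ _
          _ ≤ 1 + 1 / (1-γ) := add_le_add ha hb
          _ ≤ 2 / (1-γ) := by
              rw [show (2:ℝ) / (1-γ) = 1/(1-γ) + 1/(1-γ) from by ring]
              linarith
      calc (Q0 p.1 p.2 - Qstar p.1 p.2)^2 = |Q0 p.1 p.2 - Qstar p.1 p.2|^2 :=
            (sq_abs _).symm
        _ ≤ (2 / (1-γ))^2 := by
            apply pow_le_pow_left₀ (abs_nonneg _) h1
    calc (∑ p : S × A, (Q0 p.1 p.2 - Qstar p.1 p.2)^2)
        ≤ ∑ _p : S × A, (2 / (1-γ))^2 := Finset.sum_le_sum (fun p _ => hper p)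
      _ = (Fintype.card (S × A) : ℝ) * (2 / (1-γ))^2 := by
          rw [Finset.sum_const, Finset.card_univ, nsmul_eq_mul]
      _ = nR * (2 / (1-γ))^2 := by
          rw [hn, Fintype.card_prod]
          push_cast
          ring
  have hsM0le : Real.sqrt (∑ p : S × A, (Q0 p.1 p.2 - Qstar p.1 p.2)^2) ≤
      Real.sqrt nR * (2 / (1-γ)) := by
    calc Real.sqrt (∑ p : S × A, (Q0 p.1 p.2 - Qstar p.1 p.2)^2)
        ≤ Real.sqrt (nR * (2 / (1-γ))^2) := Real.sqrt_le_sqrt hM0le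
      _ = Real.sqrt nR * (2 / (1-γ)) := by
          rw [Real.sqrt_mul (by linarith) _, Real.sqrt_sq (by positivity)]
  -- measurable a.e. versions of the samples
  set Av : ℕ → (S × A × S) → Set Ω := fun k v => {ω | ξ k ω = v} with hAvdef
  have hAvμ : ∀ k v, μ (Av k v) = ENNReal.ofReal (LSEQ.qv P d v) := fun k v =>
    hdist k v.1 v.2.1 v.2.2
  set Sv : ℕ → (S × A × S) → Set Ω := fun k v => (toMeasurable μ ((Av k v)ᶜ))ᶜ with hSvdef
  have hSvmeas : ∀ k v, MeasurableSet (Sv k v) := fun k v =>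
    (measurableSet_toMeasurable _ _).compl
  have hSvsub : ∀ k v, Sv k v ⊆ Av k v := by
    intro k v ω hω
    by_contra hc
    exact hω (subset_toMeasurable _ _ hc)
  have hμcompl : ∀ k v, μ ((Av k v)ᶜ) ≤ 1 - ENNReal.ofReal (LSEQ.qv P d v) := by
    intro k v
    have hsub : (Av k v)ᶜ ⊆ ⋃ w ∈ Finset.univ.erase v, Av k w := by
      intro ω hω
      have hne : ξ k ω ≠ v := hω
      exact Set.mem_biUnion (Finset.mem_erase.mpr ⟨hne, Finset.mem_univ _⟩) rfl
    calc μ ((Av k v)ᶜ) ≤ μ (⋃ w ∈ Finset.univ.erase v, Av k w) := measure_mono hsub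
      _ ≤ ∑ w ∈ Finset.univ.erase v, μ (Av k w) := measure_biUnion_finset_le _ _
      _ = ∑ w ∈ Finset.univ.erase v, ENNReal.ofReal (LSEQ.qv P d w) :=
          Finset.sum_congr rfl (fun w _ => hAvμ k w)
      _ = ENNReal.ofReal (∑ w ∈ Finset.univ.erase v, LSEQ.qv P d w) :=
          (ENNReal.ofReal_sum_of_nonneg
            (fun w _ => LSEQ.qv_nonneg hP0 hd0 w)).symm
      _ = ENNReal.ofReal (1 - LSEQ.qv P d v) := by
          rw [Finset.sum_erase_eq_sub (Finset.mem_univ v),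
            LSEQ.sum_qv_one hP1 hd1]
      _ = 1 - ENNReal.ofReal (LSEQ.qv P d v) := by
          rw [ENNReal.ofReal_sub _ (LSEQ.qv_nonneg hP0 hd0 v), ENNReal.ofReal_one]
  have hASnull : ∀ k v, μ (Av k v \ Sv k v) = 0 := by
    intro k v
    have h1 : μ (Av k v ∩ Sv k v) + μ (Av k v \ Sv k v) = μ (Av k v) :=
      measure_inter_add_diff _ (hSvmeas k v)
    have h2 : Av k v ∩ Sv k v = Sv k v :=
      Set.inter_eq_self_of_subset_right (hSvsub k v)
    have h3 : μ (Av k v) ≤ μ (Sv k v) := by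
      have h4 : μ (Sv k v) = 1 - μ (toMeasurable μ ((Av k v)ᶜ)) := by
        rw [measure_compl (measurableSet_toMeasurable _ _) (measure_ne_top μ _),
          measure_univ]
      rw [h4, measure_toMeasurable]
      calc μ (Av k v) = 1 - (1 - μ (Av k v)) := by
            rw [ENNReal.sub_sub_cancel ENNReal.one_ne_top prob_le_one]
        _ ≤ 1 - μ ((Av k v)ᶜ) := by
            apply tsub_le_tsub_left
            rw [hAvμ k v]
            exact hμcompl k v
    rw [h2] at h1
    have h5 : μ (Sv k v) + μ (Av k v \ Sv k v) ≤ μ (Sv k v) + 0 := by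
      rw [add_zero, h1]
      exact h3
    have h6 := (ENNReal.add_le_add_iff_left (measure_ne_top μ _)).mp h5
    exact le_antisymm h6 zero_le
  set ξ' : ℕ → Ω → S × A × S := fun k ω =>
    if h : ∃ v, ω ∈ Sv k v then h.choose else Classical.arbitrary _ with hξ'def
  have honξ : ∀ k v ω, ω ∈ Sv k v → ξ k ω = v := fun k v ω hω => (hSvsub k v hω : _)
  have hon : ∀ k v ω, ω ∈ Sv k v → ξ' k ω = v := by
    intro k v ω hω
    have hex : ∃ w, ω ∈ Sv k w := ⟨v, hω⟩
    have h1 : ξ k ω = hex.choose := honξ k _ ω hex.choose_spec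
    have h2 : ξ k ω = v := honξ k v ω hω
    show (if h : ∃ v, ω ∈ Sv k v then h.choose else Classical.arbitrary _) = v
    rw [dif_pos hex, ← h1, h2]
  have hae1 : ∀ k : ℕ, ∀ᵐ ω ∂μ, ξ' k ω = ξ k ω := by
    intro k
    rw [MeasureTheory.ae_iff]
    have hnull : μ (⋃ v, (Av k v \ Sv k v)) = 0 :=
      measure_iUnion_null (fun v => hASnull k v)
    apply measure_mono_null _ hnull
    intro ω hω
    by_contra hc
    apply hω
    have hA : ω ∈ Av k (ξ k ω) := rfl
    have hS : ω ∈ Sv k (ξ k ω) := by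
      by_contra hS
      exact hc (Set.mem_iUnion.mpr ⟨ξ k ω, ⟨hA, hS⟩⟩)
    show ξ' k ω = ξ k ω
    exact hon k _ ω hS
  have hae : ∀ᵐ ω ∂μ, ∀ k, ξ' k ω = ξ k ω := ae_all_iff.mpr hae1
  have hsvmeas' : ∀ (k : ℕ) (v : S × A × S), MeasurableSet {ω | ξ' k ω = v} := by
    intro k v
    have hset : {ω | ξ' k ω = v} = Sv k v ∪ ((⋃ w, Sv k w)ᶜ ∩
        (if Classical.arbitrary (S × A × S) = v then Set.univ else ∅)) := by
      ext ω
      simp only [Set.mem_setOf_eq, Set.mem_union, Set.mem_inter_iff, Set.mem_compl_iff,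
        Set.mem_iUnion, not_exists]
      constructor
      · intro h
        by_cases hex : ∃ w, ω ∈ Sv k w
        · left
          obtain ⟨w, hw⟩ := hex
          have hvw : w = v := (hon k w ω hw).symm.trans h
          rw [← hvw]
          exact hw
        · right
          refine ⟨fun w hw => hex ⟨w, hw⟩, ?_⟩
          have harb : Classical.arbitrary (S × A × S) = v := by
            have : ξ' k ω = Classical.arbitrary (S × A × S) := by
              show (if h : ∃ v, ω ∈ Sv k v then h.choose else Classical.arbitrary _) =
                Classical.arbitrary _
              rw [dif_neg hex]
            rw [← this, h]
          rw [if_pos harb]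
          trivial
      · intro h
        rcases h with h | ⟨hno, hv⟩
        · exact hon k v ω h
        · by_cases harb : Classical.arbitrary (S × A × S) = v
          · have hex : ¬ ∃ w, ω ∈ Sv k w := fun ⟨w, hw⟩ => hno w hw
            show (if h : ∃ v, ω ∈ Sv k v then h.choose else Classical.arbitrary _) = v
            rw [dif_neg hex, harb]
          · rw [if_neg harb] at hv
            exact absurd hv (Set.notMem_empty ω)
    rw [hset]
    apply (hSvmeas k v).union
    apply ((MeasurableSet.iUnion (fun w => hSvmeas k w)).compl).inter
    by_cases harb : Classical.arbitrary (S × A × S) = v <;>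
      simp [harb, MeasurableSet.univ, MeasurableSet.empty]
  -- the law of the measurable versions
  have hLAW : ∀ (k : ℕ) (t : Fin k → S × A × S),
      μ {ω | ∀ j : Fin k, ξ' (j : ℕ) ω = t j} = ENNReal.ofReal (LSEQ.Wt P d k t) := by
    intro k t
    have hswap : μ {ω | ∀ j : Fin k, ξ' (j : ℕ) ω = t j} =
        μ {ω | ∀ j : Fin k, ξ (j : ℕ) ω = t j} := by
      apply measure_congr
      rw [Filter.eventuallyEq_set]
      filter_upwards [hae] with ω hω
      exact ⟨fun h j => by rw [← hω j]; exact h j, fun h j => by rw [hω j]; exact h j⟩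
    rw [hswap]
    set tn : ℕ → S × A × S := fun j =>
      if h : j < k then t ⟨j, h⟩ else Classical.arbitrary _ with htn
    have hset : {ω | ∀ j : Fin k, ξ (j : ℕ) ω = t j} =
        ⋂ j ∈ Finset.range k, ξ j ⁻¹' {tn j} := by
      ext ω
      simp only [Set.mem_setOf_eq, Set.mem_iInter, Set.mem_preimage,
        Set.mem_singleton_iff, Finset.mem_range]
      constructor
      · intro h j hj
        have : tn j = t ⟨j, hj⟩ := dif_pos hj
        rw [this]
        exact h ⟨j, hj⟩
      · intro h j
        have h1 := h (j : ℕ) j.isLt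
        have h2 : tn (j : ℕ) = t j := by
          rw [show tn (j : ℕ) = t ⟨(j : ℕ), j.isLt⟩ from dif_pos j.isLt]
        rw [h2] at h1
        exact h1
    rw [hset]
    have hprod := (ProbabilityTheory.iIndepFun_iff_measure_inter_preimage_eq_mul.mp
      hindep) (Finset.range k) (sets := fun j => ({tn j} : Set (S × A × S)))
      (fun i _ => MeasurableSpace.measurableSet_top)
    rw [hprod]
    have hterm : ∀ j ∈ Finset.range k,
        μ (ξ j ⁻¹' {tn j}) = ENNReal.ofReal (LSEQ.qv P d (tn j)) := by
      intro j _
      have hpre : ξ j ⁻¹' {tn j} = {ω | ξ j ω = tn j} := by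
        ext ω; simp [Set.mem_preimage]
      rw [hpre]
      exact hdist j (tn j).1 (tn j).2.1 (tn j).2.2
    rw [Finset.prod_congr rfl hterm,
      ← ENNReal.ofReal_prod_of_nonneg (fun j _ => LSEQ.qv_nonneg hP0 hd0 _)]
    congr 1
    have hfr := Fin.prod_univ_eq_prod_range (fun j => LSEQ.qv P d (tn j)) k
    rw [← hfr]
    apply Finset.prod_congr rfl
    intro j _
    congr 1
    rw [show tn (j : ℕ) = t ⟨(j : ℕ), j.isLt⟩ from dif_pos j.isLt]
  -- integral formula
  have hINT : ∀ (k : ℕ) (F : (Fin k → S × A × S) → ℝ),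
      ∫ ω, F (fun j => ξ' (j : ℕ) ω) ∂μ =
      ∑ t : Fin k → S × A × S, LSEQ.Wt P d k t * F t := by
    intro k F
    have hBmeas : ∀ t : Fin k → S × A × S,
        MeasurableSet {ω | (fun j : Fin k => ξ' (j : ℕ) ω) = t} := by
      intro t
      have : {ω | (fun j : Fin k => ξ' (j : ℕ) ω) = t} =
          ⋂ j : Fin k, {ω | ξ' (j : ℕ) ω = t j} := by
        ext ω
        simp [funext_iff]
      rw [this]
      exact MeasurableSet.iInter (fun j => hsvmeas' (j : ℕ) (t j))
    have hrep : ∀ ω, F (fun j => ξ' (j : ℕ) ω) =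
        ∑ t : Fin k → S × A × S, (if (fun j : Fin k => ξ' (j : ℕ) ω) = t
          then F t else 0) := by
      intro ω
      rw [Finset.sum_ite_eq]
      simp
    have hindic : ∀ t : Fin k → S × A × S,
        (fun ω => if (fun j : Fin k => ξ' (j : ℕ) ω) = t then F t else 0) =
        Set.indicator {ω | (fun j : Fin k => ξ' (j : ℕ) ω) = t} (fun _ => F t) := by
      intro t
      funext ω
      by_cases h : (fun j : Fin k => ξ' (j : ℕ) ω) = t <;>
        simp [h, Set.indicator_apply, Set.mem_setOf_eq]
    calc ∫ ω, F (fun j => ξ' (j : ℕ) ω) ∂μ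
        = ∫ ω, ∑ t : Fin k → S × A × S,
            (if (fun j : Fin k => ξ' (j : ℕ) ω) = t then F t else 0) ∂μ :=
          integral_congr_ae (Filter.Eventually.of_forall hrep)
      _ = ∑ t : Fin k → S × A × S,
            ∫ ω, (if (fun j : Fin k => ξ' (j : ℕ) ω) = t then F t else 0) ∂μ := by
          apply integral_finset_sum
          intro t _
          rw [hindic t]
          exact (integrable_const (F t)).indicator (hBmeas t)
      _ = ∑ t : Fin k → S × A × S, LSEQ.Wt P d k t * F t := by
          apply Finset.sum_congr rfl
          intro t _
          rw [hindic t, integral_indicator_const _ (hBmeas t)]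
          have hBeq : {ω | (fun j : Fin k => ξ' (j : ℕ) ω) = t} =
              {ω | ∀ j : Fin k, ξ' (j : ℕ) ω = t j} := by
            ext ω
            simp [funext_iff]
          rw [hBeq, measureReal_def, hLAW k t, ENNReal.toReal_ofReal (LSEQ.Wt_nonneg hP0 hd0 k t),
            smul_eq_mul]
  -- identification of the iterates
  have hIDENT : ∀ ω, (∀ j, ξ' j ω = ξ j ω) → ∀ k,
      QLSE k ω = LSEQ.QT α γ β r Q0 k (fun j : Fin k => ξ' (j : ℕ) ω) := by
    intro ω hω k
    induction k with
    | zero => rw [hQLSE0 ω]; rfl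
    | succ k ih =>
      funext s a
      rw [hQLSErec k ω s a]
      have hlast : (fun j : Fin (k+1) => ξ' (j : ℕ) ω) (Fin.last k) = ξ k ω := by
        show ξ' ((Fin.last k : Fin (k+1)) : ℕ) ω = ξ k ω
        rw [Fin.val_last]
        exact hω k
      have hinit : Fin.init (fun j : Fin (k+1) => ξ' (j : ℕ) ω) =
          fun j : Fin k => ξ' (j : ℕ) ω := by
        funext j
        rfl
      show _ = LSEQ.stepQ α γ β r ((fun j : Fin (k+1) => ξ' (j : ℕ) ω) (Fin.last k))
        (LSEQ.QT α γ β r Q0 k (Fin.init (fun j : Fin (k+1) => ξ' (j : ℕ) ω))) s a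
      rw [hinit, hlast, ← ih]
      rfl
  -- the main chain
  intro k
  have hbridge : ∫ ω, (Finset.univ.sup' Finset.univ_nonempty
      fun p : S × A => |QLSE k ω p.1 p.2 - Qstar p.1 p.2|) ∂μ =
      ∑ t : Fin k → S × A × S, LSEQ.Wt P d k t *
        LSEQ.NrmP (LSEQ.eT α γ β r Q0 Qstar k t) := by
    rw [← hINT k (fun t => LSEQ.NrmP (LSEQ.eT α γ β r Q0 Qstar k t))]
    apply integral_congr_ae
    filter_upwards [hae] with ω hω
    rw [hIDENT ω hω k]
    rfl
  rw [hbridge]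
  have hmain := LSEQ.Etar_bound (Q0 := Q0) (Qstar := Qstar) hα0 hα1 hγ0 hγ1 hβ
    hP0 hP1 hd0 hd1 hr hQ0bd hBell hdmin0 hdminle hdmaxge hρ hρ0.le hρ1 k
  apply le_trans hmain
  have hfin := LSEQ.final_numeric α γ β (Real.log (Fintype.card A)) dmin dmax ρ nR
    (Real.sqrt (∑ p : S × A, (Q0 p.1 p.2 - Qstar p.1 p.2)^2))
    (LSEQ.Qm γ β (Real.log (Fintype.card A))) k
    hα0 hα1 hγ0 hγ1 hβ hL0 hdmin0 hdd hdmax1 hρ hρ0 hρ1 hn1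
    (Real.sqrt_nonneg _) hsM0le rfl
  exact hfin
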